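/- arXiv:1204.3676 — 2 statements merged into one kernel-verified Lean document; each statement's English description precedes it below -/
import Mathlib

section
/- Define ω(x) = x + (1/2a)·((H(Z^0(x)) − H̄^−) − (I(Z^0(x)) − Ī^+)). Then ω is a Lipschitz, strictly increasing bijection of ℝ with a.e. derivative ω'(x) = (μ̄^0_+ − λ̄^0_−)/(μ^0(x) − λ^0(x)), which is bounded below by a positive constant, and X(t, Z^0(x)) − ((λ̄^0_− + μ̄^0_+)/2)·t → ω(x) as t → +∞, pointwise on ℝ and uniformly on every compact subset of ℝ; moreover, letting θ = ω^{-1} (which is Lipschitz and strictly increasing), θ(X(t, Z^0(x)) − ((λ̄^0_− + μ̄^0_+)/2)·t) → x as t → +∞, pointwise on ℝ and uniformly on every compact subset of ℝ. -/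
open MeasureTheory Filter Set
open scoped NNReal ENNReal

lemma bdd_integrableOn {f : ℝ → ℝ} (hf : Measurable f) {M : ℝ} (hb : ∀ x, |f x| ≤ M)
    {s : Set ℝ} (hs : volume s < ⊤) : IntegrableOn f s volume := by
  have h0 : IntegrableOn (fun _ : ℝ => M) s volume := integrableOn_const hs.ne
  exact h0.mono' hf.aestronglyMeasurable.restrict (ae_of_all _ fun x => by simpa using hb x)

lemma bdd_intervalIntegrable {f : ℝ → ℝ} (hf : Measurable f) {M : ℝ}
    (hb : ∀ x, |f x| ≤ M) (u v : ℝ) : IntervalIntegrable f volume u v := by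
  rw [intervalIntegrable_iff]
  exact bdd_integrableOn hf hb measure_Ioc_lt_top

lemma ae_ftc {f : ℝ → ℝ} (hf : Measurable f) {M : ℝ} (hb : ∀ x, |f x| ≤ M) :
    ∀ᵐ x : ℝ, HasDerivAt (fun y => ∫ t in (0:ℝ)..y, f t) (f x) x := by
  have hint : ∀ u v : ℝ, IntervalIntegrable f volume u v := bdd_intervalIntegrable hf hb
  have hloc : LocallyIntegrable f volume := fun x =>
    ⟨Metric.closedBall x 1, Metric.closedBall_mem_nhds x one_pos,
      bdd_integrableOn hf hb measure_closedBall_lt_top⟩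
  filter_upwards [(Besicovitch.vitaliFamily (volume : Measure ℝ)).ae_tendsto_average_norm_sub
    hloc] with x hx
  have hx' : Tendsto (fun r : ℝ => ⨍ y in Metric.closedBall x r, ‖f y - f x‖)
      (nhdsWithin 0 (Ioi 0)) (nhds 0) := hx.comp (Besicovitch.tendsto_filterAt volume x)
  rw [hasDerivAt_iff_tendsto_slope, ← tendsto_sub_nhds_zero_iff]
  have habs : Tendsto (fun y : ℝ => |y - x|) (nhdsWithin x {x}ᶜ) (nhdsWithin 0 (Ioi 0)) := by
    rw [tendsto_nhdsWithin_iff]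
    constructor
    · have h : Tendsto (fun y : ℝ => |y - x|) (nhds x) (nhds |x - x|) :=
        ((continuous_id.sub continuous_const).abs).continuousAt
      simpa using h.mono_left nhdsWithin_le_nhds
    · exact eventually_mem_nhdsWithin.mono fun y hy => by
        simpa [abs_pos, sub_ne_zero] using hy
  have hx2 : Tendsto (fun y : ℝ => 2 * ⨍ t in Metric.closedBall x |y - x|, ‖f t - f x‖)
      (nhdsWithin x {x}ᶜ) (nhds 0) := by
    have h := (hx'.comp habs).const_mul 2
    simpa using h
  apply squeeze_zero_norm' ?_ hx2
  filter_upwards [eventually_mem_nhdsWithin] with y hy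
  have hyx : y ≠ x := hy
  have hr : 0 < |y - x| := abs_pos.2 (sub_ne_zero.2 hyx)
  have h1 : (∫ t in (0:ℝ)..y, f t) - (∫ t in (0:ℝ)..x, f t) = ∫ t in x..y, f t :=
    intervalIntegral.integral_interval_sub_left (hint 0 y) (hint 0 x)
  have h2 : (∫ t in x..y, f t) - (y - x) * f x = ∫ t in x..y, (f t - f x) := by
    rw [intervalIntegral.integral_sub (hint x y) intervalIntegrable_const,
      intervalIntegral.integral_const, smul_eq_mul]
  have hmeas2 : Measurable fun t => ‖f t - f x‖ := (hf.sub measurable_const).norm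
  have hb2 : ∀ t, |‖f t - f x‖| ≤ M + M := by
    intro t
    have e1 := abs_le.1 (hb t); have e2 := abs_le.1 (hb x)
    rw [Real.norm_eq_abs, abs_abs, abs_le]
    constructor <;> linarith
  have h3 : ‖∫ t in x..y, (f t - f x)‖ ≤
      ∫ t in Metric.closedBall x |y - x|, ‖f t - f x‖ := by
    refine (intervalIntegral.norm_integral_le_integral_norm_uIoc).trans ?_
    refine setIntegral_mono_set
      (bdd_integrableOn hmeas2 hb2 measure_closedBall_lt_top)
      (ae_of_all _ fun t => norm_nonneg _) (HasSubset.Subset.eventuallyLE ?_)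
    intro t ht
    rw [Set.mem_uIoc] at ht
    rw [Metric.mem_closedBall, Real.dist_eq]
    have e1 := neg_abs_le (y - x); have e2 := le_abs_self (y - x)
    rcases ht with ⟨ha1, ha2⟩ | ⟨ha1, ha2⟩ <;> rw [abs_le] <;> constructor <;> linarith
  have h4 : ∫ t in Metric.closedBall x |y - x|, ‖f t - f x‖ =
      (2 * |y - x|) * ⨍ t in Metric.closedBall x |y - x|, ‖f t - f x‖ := by
    rw [setAverage_eq, Real.volume_real_closedBall (by positivity),
      smul_eq_mul]
    field_simp
  have h5 : slope (fun y => ∫ t in (0:ℝ)..y, f t) x y - f x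
      = (y - x)⁻¹ * ((∫ t in x..y, f t) - (y - x) * f x) := by
    have hne : y - x ≠ 0 := sub_ne_zero.2 hyx
    rw [slope_def_field, h1]
    field_simp
  calc ‖slope (fun y => ∫ t in (0:ℝ)..y, f t) x y - f x‖
      = |y - x|⁻¹ * ‖(∫ t in x..y, f t) - (y - x) * f x‖ := by
        rw [h5, norm_mul, norm_inv, Real.norm_eq_abs]
    _ = |y - x|⁻¹ * ‖∫ t in x..y, (f t - f x)‖ := by rw [h2]
    _ ≤ |y - x|⁻¹ * ∫ t in Metric.closedBall x |y - x|, ‖f t - f x‖ := by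
        exact mul_le_mul_of_nonneg_left h3 (inv_nonneg.2 hr.le)
    _ = 2 * ⨍ t in Metric.closedBall x |y - x|, ‖f t - f x‖ := by
        rw [h4]; field_simp

lemma cov_Ioc {g : ℝ → ℝ} (hg : Measurable g) {c C : ℝ} (hc : 0 < c)
    (hgl : ∀ x, c ≤ g x) (hgu : ∀ x, g x ≤ C)
    {Z : ℝ → ℝ} (hZ : ∀ x, Z x = ∫ t in (0:ℝ)..x, g t)
    {Xi : ℝ → ℝ} (hZX : ∀ z, Z (Xi z) = z)
    {h : ℝ → ℝ} (hh : Measurable h)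
    (u v : ℝ) :
    ∫ t in Ioc (Z u) (Z v), h t = ∫ t in Ioc u v, g t * h (Z t) := by
  have hgb : ∀ x, |g x| ≤ C := fun x =>
    (abs_of_pos (hc.trans_le (hgl x))).le.trans (hgu x)
  have hgInt : ∀ p q : ℝ, IntervalIntegrable g volume p q := bdd_intervalIntegrable hg hgb
  have hZsub : ∀ p q : ℝ, Z q - Z p = ∫ t in p..q, g t := fun p q => by
    rw [hZ, hZ]; exact intervalIntegral.integral_interval_sub_left (hgInt 0 q) (hgInt 0 p)
  have hZmono : StrictMono Z := by
    intro p q hpq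
    have h1 := hZsub p q
    have h2 : (∫ t in p..q, (fun _ => c) t) ≤ ∫ t in p..q, g t :=
      intervalIntegral.integral_mono_on hpq.le intervalIntegrable_const (hgInt p q)
        fun x _ => hgl x
    rw [intervalIntegral.integral_const, smul_eq_mul] at h2
    nlinarith
  have hZmeas : Measurable Z := hZmono.monotone.measurable
  have hXmono : StrictMono Xi := by
    intro p q hpq
    rw [← hZX p, ← hZX q] at hpq
    exact hZmono.lt_iff_lt.mp hpq
  set μ : Measure ℝ := volume.withDensity fun x => ENNReal.ofReal (g x) with hμdef
  have μIoc : ∀ p q : ℝ, p ≤ q → μ (Ioc p q) = ENNReal.ofReal (Z q - Z p) := by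
    intro p q hpq
    rw [hμdef, withDensity_apply _ measurableSet_Ioc]
    rw [← ofReal_integral_eq_lintegral_ofReal
      (bdd_integrableOn hg hgb measure_Ioc_lt_top)
      (ae_of_all _ fun x => (hc.trans_le (hgl x)).le)]
    rw [hZsub p q, intervalIntegral.integral_of_le hpq]
  have hmap : μ.map Z = volume := by
    refine Measure.ext_of_Ioc' _ _ (fun p q hpq => ?_) (fun p q hpq => ?_)
    · rw [Measure.map_apply hZmeas measurableSet_Ioc]
      have hpre : Z ⁻¹' Ioc p q = Ioc (Xi p) (Xi q) := by
        ext t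
        simp only [mem_preimage, mem_Ioc]
        rw [← hZX p, ← hZX q, hZmono.lt_iff_lt, hZmono.le_iff_le, hZX p, hZX q]
      rw [hpre, μIoc _ _ (hXmono hpq).le]
      exact ENNReal.ofReal_ne_top
    · rw [Measure.map_apply hZmeas measurableSet_Ioc]
      have hpre : Z ⁻¹' Ioc p q = Ioc (Xi p) (Xi q) := by
        ext t
        simp only [mem_preimage, mem_Ioc]
        rw [← hZX p, ← hZX q, hZmono.lt_iff_lt, hZmono.le_iff_le, hZX p, hZX q]
      rw [hpre, μIoc _ _ (hXmono hpq).le, hZX, hZX, Real.volume_Ioc]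
  have hpre2 : Z ⁻¹' Ioc (Z u) (Z v) = Ioc u v := by
    ext t
    simp only [mem_preimage, mem_Ioc]
    rw [hZmono.lt_iff_lt, hZmono.le_iff_le]
  calc ∫ t in Ioc (Z u) (Z v), h t
      = ∫ t in Ioc (Z u) (Z v), h t ∂(μ.map Z) := by rw [hmap]
    _ = ∫ t in Z ⁻¹' Ioc (Z u) (Z v), h (Z t) ∂μ :=
        setIntegral_map measurableSet_Ioc
          (by rw [hmap]; exact hh.aestronglyMeasurable) hZmeas.aemeasurable
    _ = ∫ t in Ioc u v, h (Z t) ∂μ := by rw [hpre2]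
    _ = ∫ t in Ioc u v, g t * h (Z t) := by
        rw [show μ = volume.withDensity (fun x => ((g x).toNNReal : ℝ≥0∞)) from rfl,
          setIntegral_withDensity_eq_setIntegral_smul hg.real_toNNReal _ measurableSet_Ioc]
        refine setIntegral_congr_fun measurableSet_Ioc fun t _ => ?_
        simp [NNReal.smul_def, Real.coe_toNNReal _ (hc.trans_le (hgl t)).le]


set_option maxHeartbeats 1000000

theorem stmt_18
    (a : ℝ) (ha : 0 < a)
    (lam0 mu0 : ℝ → ℝ) (hlm : Measurable lam0) (hmm : Measurable mu0)
    (hlbdd : BddAbove (Set.range lam0)) (hlbdd' : BddBelow (Set.range lam0))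
    (hmbdd : BddAbove (Set.range mu0)) (hmbdd' : BddBelow (Set.range mu0))
    (hsep : sSup (Set.range lam0) < sInf (Set.range mu0))
    (lbar mbar : ℝ)
    (hlL1 : Integrable (fun x => lam0 x - lbar))
    (hmL1 : Integrable (fun x => mu0 x - mbar))
    (hllim : Tendsto lam0 atBot (nhds lbar))
    (hmlim : Tendsto mu0 atTop (nhds mbar))
    (Z0 X0 : ℝ → ℝ)
    (hZ0 : ∀ x, Z0 x = ∫ ξ in (0:ℝ)..x, 2 * a / (mu0 ξ - lam0 ξ))
    (hX0Z0 : ∀ x, X0 (Z0 x) = x) (hZ0X0 : ∀ z, Z0 (X0 z) = z)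
    (X : ℝ → ℝ → ℝ)
    (hX : ∀ t z, X t z = (1 / (2 * a)) * (∫ ξ in (0:ℝ)..(z + a * t), mu0 (X0 ξ))
        - (1 / (2 * a)) * (∫ ξ in (0:ℝ)..(z - a * t), lam0 (X0 ξ)))
    (H I : ℝ → ℝ)
    (hH : ∀ y, H y = ∫ ξ in (1:ℝ)..y, (lam0 (X0 ξ) - lbar))
    (hI : ∀ y, I y = ∫ ξ in (1:ℝ)..y, (mu0 (X0 ξ) - mbar))
    (Hbar Ibar : ℝ)
    (hHbar : Tendsto H atBot (nhds Hbar))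
    (hIbar : Tendsto I atTop (nhds Ibar))
    (ω : ℝ → ℝ)
    (hω : ∀ x, ω x = x + (1 / (2 * a)) * ((H (Z0 x) - Hbar) - (I (Z0 x) - Ibar))) :
    (∃ L : NNReal, LipschitzWith L ω) ∧ StrictMono ω ∧ Function.Bijective ω ∧
    (∀ᵐ x : ℝ, HasDerivAt ω ((mbar - lbar) / (mu0 x - lam0 x)) x) ∧
    (∃ γ > (0:ℝ), ∀ x : ℝ, γ ≤ (mbar - lbar) / (mu0 x - lam0 x)) ∧
    (∀ x : ℝ, Tendsto (fun t => X t (Z0 x) - ((lbar + mbar) / 2) * t)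
        atTop (nhds (ω x))) ∧
    (∀ s : Set ℝ, IsCompact s → TendstoUniformlyOn
        (fun t x => X t (Z0 x) - ((lbar + mbar) / 2) * t) ω atTop s) ∧
    (∃ L : NNReal, LipschitzWith L (Function.invFun ω)) ∧
    StrictMono (Function.invFun ω) ∧
    (∀ x : ℝ, Tendsto
        (fun t => Function.invFun ω (X t (Z0 x) - ((lbar + mbar) / 2) * t))
        atTop (nhds x)) ∧
    (∀ s : Set ℝ, IsCompact s → TendstoUniformlyOn
        (fun t x => Function.invFun ω (X t (Z0 x) - ((lbar + mbar) / 2) * t))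
        id atTop s) := by
  -- ### basic bounds
  have hl1 : ∀ x, lam0 x ≤ sSup (Set.range lam0) := fun x => le_csSup hlbdd ⟨x, rfl⟩
  have hl2 : ∀ x, sInf (Set.range lam0) ≤ lam0 x := fun x => csInf_le hlbdd' ⟨x, rfl⟩
  have hm1 : ∀ x, mu0 x ≤ sSup (Set.range mu0) := fun x => le_csSup hmbdd ⟨x, rfl⟩
  have hm2 : ∀ x, sInf (Set.range mu0) ≤ mu0 x := fun x => csInf_le hmbdd' ⟨x, rfl⟩
  set c0 : ℝ := sInf (Set.range mu0) - sSup (Set.range lam0) with hc0def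
  set C0 : ℝ := sSup (Set.range mu0) - sInf (Set.range lam0) with hC0def
  have hc0 : 0 < c0 := sub_pos.2 hsep
  have hd1 : ∀ x, c0 ≤ mu0 x - lam0 x := fun x => by
    have := hm2 x; have := hl1 x; rw [hc0def]; linarith
  have hd2 : ∀ x, mu0 x - lam0 x ≤ C0 := fun x => by
    have := hm1 x; have := hl2 x; rw [hC0def]; linarith
  have hdpos : ∀ x, 0 < mu0 x - lam0 x := fun x => lt_of_lt_of_le hc0 (hd1 x)
  have hC0 : 0 < C0 := lt_of_lt_of_le hc0 ((hd1 0).trans (hd2 0))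
  have hlbar1 : lbar ≤ sSup (Set.range lam0) :=
    le_of_tendsto hllim (Eventually.of_forall hl1)
  have hlbar2 : sInf (Set.range lam0) ≤ lbar :=
    ge_of_tendsto hllim (Eventually.of_forall hl2)
  have hmbar1 : mbar ≤ sSup (Set.range mu0) :=
    le_of_tendsto hmlim (Eventually.of_forall hm1)
  have hmbar2 : sInf (Set.range mu0) ≤ mbar :=
    ge_of_tendsto hmlim (Eventually.of_forall hm2)
  have hml1 : c0 ≤ mbar - lbar := by rw [hc0def]; linarith
  have hml2 : mbar - lbar ≤ C0 := by rw [hC0def]; linarith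
  have hmlpos : 0 < mbar - lbar := lt_of_lt_of_le hc0 hml1
  -- ### the density g
  set g : ℝ → ℝ := fun x => 2 * a / (mu0 x - lam0 x) with hgdef
  have hgmeas : Measurable g := measurable_const.div (hmm.sub hlm)
  have hgl : ∀ x, 2 * a / C0 ≤ g x := by
    intro x
    show 2 * a / C0 ≤ 2 * a / (mu0 x - lam0 x)
    have h1 := hdpos x; have h2 := hd2 x
    gcongr
  have hgu : ∀ x, g x ≤ 2 * a / c0 := by
    intro x
    show 2 * a / (mu0 x - lam0 x) ≤ 2 * a / c0
    have h1 := hdpos x; have h2 := hd1 x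
    gcongr
  have hgpos : ∀ x, 0 < g x := fun x => div_pos (by linarith) (hdpos x)
  have hgb : ∀ x, |g x| ≤ 2 * a / c0 := fun x => (abs_of_pos (hgpos x)).le.trans (hgu x)
  have hgInt : ∀ p q : ℝ, IntervalIntegrable g volume p q := bdd_intervalIntegrable hgmeas hgb
  have hZ0' : ∀ x, Z0 x = ∫ t in (0:ℝ)..x, g t := fun x => by rw [hZ0]
  have hZsub : ∀ p q : ℝ, Z0 q - Z0 p = ∫ t in p..q, g t := fun p q => by
    rw [hZ0' q, hZ0' p]
    exact intervalIntegral.integral_interval_sub_left (hgInt 0 q) (hgInt 0 p)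
  have hZlow : ∀ p q : ℝ, p ≤ q → (2 * a / C0) * (q - p) ≤ Z0 q - Z0 p := by
    intro p q hpq
    have h2 : (∫ t in p..q, (fun _ => 2 * a / C0) t) ≤ ∫ t in p..q, g t :=
      intervalIntegral.integral_mono_on hpq intervalIntegrable_const (hgInt p q)
        fun x _ => hgl x
    rw [intervalIntegral.integral_const, smul_eq_mul] at h2
    rw [hZsub p q]
    linarith
  have hZmono : StrictMono Z0 := by
    intro p q hpq
    have := hZlow p q hpq.le
    have h3 : 0 < (2 * a / C0) * (q - p) := mul_pos (by positivity) (sub_pos.2 hpq)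
    linarith
  have hZlip : ∀ p q : ℝ, |Z0 q - Z0 p| ≤ (2 * a / c0) * |q - p| := by
    intro p q
    rw [hZsub p q]
    have hno : ‖∫ t in p..q, g t‖ ≤ (2 * a / c0) * |q - p| :=
      intervalIntegral.norm_integral_le_of_norm_le_const (fun x _ => by simpa using hgb x)
    simpa [Real.norm_eq_abs, abs_sub_comm q p] using hno
  have hZ00 : Z0 0 = 0 := by rw [hZ0']; simp
  -- ### X0 facts
  have hXmono : StrictMono X0 := by
    intro p q hpq
    rw [← hZ0X0 p, ← hZ0X0 q] at hpq
    exact hZmono.lt_iff_lt.mp hpq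
  have hXmeas : Measurable X0 := hXmono.monotone.measurable
  -- bounded compositions
  have hlXmeas : Measurable fun ξ => lam0 (X0 ξ) := hlm.comp hXmeas
  have hmXmeas : Measurable fun ξ => mu0 (X0 ξ) := hmm.comp hXmeas
  set Ml : ℝ := |sInf (Set.range lam0)| + |sSup (Set.range lam0)| with hMldef
  set Mm : ℝ := |sInf (Set.range mu0)| + |sSup (Set.range mu0)| with hMmdef
  have hlXb : ∀ ξ, |lam0 (X0 ξ)| ≤ Ml := by
    intro ξ
    have h1 := hl1 (X0 ξ); have h2 := hl2 (X0 ξ)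
    have e1 := le_abs_self (sSup (Set.range lam0))
    have e2 := neg_abs_le (sInf (Set.range lam0))
    have e3 := abs_nonneg (sInf (Set.range lam0))
    have e4 := abs_nonneg (sSup (Set.range lam0))
    rw [hMldef, abs_le]; constructor <;> linarith
  have hmXb : ∀ ξ, |mu0 (X0 ξ)| ≤ Mm := by
    intro ξ
    have h1 := hm1 (X0 ξ); have h2 := hm2 (X0 ξ)
    have e1 := le_abs_self (sSup (Set.range mu0))
    have e2 := neg_abs_le (sInf (Set.range mu0))
    have e3 := abs_nonneg (sInf (Set.range mu0))
    have e4 := abs_nonneg (sSup (Set.range mu0))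
    rw [hMmdef, abs_le]; constructor <;> linarith
  have hlXInt : ∀ p q : ℝ, IntervalIntegrable (fun ξ => lam0 (X0 ξ)) volume p q :=
    bdd_intervalIntegrable hlXmeas hlXb
  have hmXInt : ∀ p q : ℝ, IntervalIntegrable (fun ξ => mu0 (X0 ξ)) volume p q :=
    bdd_intervalIntegrable hmXmeas hmXb
  -- ### change of variables : key identity
  have hkey : ∀ x, ((∫ t in (0:ℝ)..(Z0 x), mu0 (X0 t)) - ∫ t in (0:ℝ)..(Z0 x), lam0 (X0 t))
      = 2 * a * x := by
    have hhmeas : Measurable fun ξ => mu0 (X0 ξ) - lam0 (X0 ξ) := hmXmeas.sub hlXmeas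
    have hIoc : ∀ u v : ℝ, ∫ t in Ioc (Z0 u) (Z0 v), (mu0 (X0 t) - lam0 (X0 t))
        = ∫ t in Ioc u v, g t * (mu0 (X0 (Z0 t)) - lam0 (X0 (Z0 t))) :=
      cov_Ioc hgmeas (div_pos (by linarith) hC0) hgl hgu hZ0' hZ0X0 hhmeas
    have hprod : ∀ t : ℝ, g t * (mu0 (X0 (Z0 t)) - lam0 (X0 (Z0 t))) = 2 * a := by
      intro t
      rw [hX0Z0 t]
      exact div_mul_cancel₀ _ (hdpos t).ne'
    have hconst : ∀ u v : ℝ, u ≤ v →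
        ∫ t in Ioc (Z0 u) (Z0 v), (mu0 (X0 t) - lam0 (X0 t)) = 2 * a * (v - u) := by
      intro u v huv
      rw [hIoc u v]
      simp only [hprod]
      rw [setIntegral_const, Real.volume_real_Ioc_of_le huv,
        smul_eq_mul]
      ring
    intro x
    have hsplit : (∫ t in (0:ℝ)..(Z0 x), (mu0 (X0 t) - lam0 (X0 t)))
        = (∫ t in (0:ℝ)..(Z0 x), mu0 (X0 t)) - ∫ t in (0:ℝ)..(Z0 x), lam0 (X0 t) :=
      intervalIntegral.integral_sub (hmXInt 0 (Z0 x)) (hlXInt 0 (Z0 x))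
    rw [← hsplit]
    rcases le_total 0 x with hx | hx
    · have h0x : (0:ℝ) ≤ Z0 x := by rw [← hZ00]; exact hZmono.monotone hx
      rw [intervalIntegral.integral_of_le h0x]
      have := hconst 0 x hx
      rw [hZ00] at this
      rw [this]; ring
    · have h0x : Z0 x ≤ (0:ℝ) := by rw [← hZ00]; exact hZmono.monotone hx
      rw [intervalIntegral.integral_of_ge h0x]
      have := hconst x 0 hx
      rw [hZ00] at this
      rw [this]; ring
  -- ### H and I decompositions
  have hHdec : ∀ z, (∫ t in (0:ℝ)..z, lam0 (X0 t)) = H z - H 0 + lbar * z := by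
    intro z
    have h1 : H z - H 0 = ∫ t in (0:ℝ)..z, (lam0 (X0 t) - lbar) := by
      rw [hH z, hH 0]
      have hInt : ∀ p q : ℝ, IntervalIntegrable (fun ξ => lam0 (X0 ξ) - lbar) volume p q := by
        apply bdd_intervalIntegrable (hlXmeas.sub measurable_const) (M := Ml + |lbar|)
        intro ξ
        show |lam0 (X0 ξ) - lbar| ≤ Ml + |lbar|
        have h := abs_le.1 (hlXb ξ)
        have e1 := le_abs_self lbar; have e2 := neg_abs_le lbar
        rw [abs_le]; constructor <;> linarith
      exact intervalIntegral.integral_interval_sub_left (hInt 1 z) (hInt 1 0)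
    rw [intervalIntegral.integral_sub (hlXInt 0 z) intervalIntegrable_const,
      intervalIntegral.integral_const, smul_eq_mul] at h1
    linarith
  have hIdec : ∀ z, (∫ t in (0:ℝ)..z, mu0 (X0 t)) = I z - I 0 + mbar * z := by
    intro z
    have h1 : I z - I 0 = ∫ t in (0:ℝ)..z, (mu0 (X0 t) - mbar) := by
      rw [hI z, hI 0]
      have hInt : ∀ p q : ℝ, IntervalIntegrable (fun ξ => mu0 (X0 ξ) - mbar) volume p q := by
        apply bdd_intervalIntegrable (hmXmeas.sub measurable_const) (M := Mm + |mbar|)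
        intro ξ
        show |mu0 (X0 ξ) - mbar| ≤ Mm + |mbar|
        have h := abs_le.1 (hmXb ξ)
        have e1 := le_abs_self mbar; have e2 := neg_abs_le mbar
        rw [abs_le]; constructor <;> linarith
      exact intervalIntegral.integral_interval_sub_left (hInt 1 z) (hInt 1 0)
    rw [intervalIntegral.integral_sub (hmXInt 0 z) intervalIntegrable_const,
      intervalIntegral.integral_const, smul_eq_mul] at h1
    linarith
  -- ### the affine form of ω
  set c : ℝ := (mbar - lbar) / (2 * a) with hcdef
  set Cc : ℝ := (H 0 - I 0 + Ibar - Hbar) / (2 * a) with hCcdef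
  have hcpos : 0 < c := div_pos hmlpos (by linarith)
  have ωid : ∀ x, ω x = c * Z0 x + Cc := by
    intro x
    have h1 := hHdec (Z0 x)
    have h2 := hIdec (Z0 x)
    have h3 := hkey x
    have hHI : H (Z0 x) - I (Z0 x)
        = -(2 * a * x) + H 0 - I 0 + (mbar - lbar) * Z0 x := by
      linear_combination -h1 + h2 - h3
    have ha' : (2 : ℝ) * a ≠ 0 := by positivity
    rw [hω x, hcdef, hCcdef]
    field_simp
    linear_combination hHI

  -- ### strict mono, surjective, Lipschitz
  have hωmono : StrictMono ω := by
    intro p q hpq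
    rw [ωid p, ωid q]
    have h := mul_lt_mul_of_pos_left (hZmono hpq) hcpos
    linarith
  have hωsurj : Function.Surjective ω := by
    intro y
    refine ⟨X0 ((y - Cc) / c), ?_⟩
    rw [ωid, hZ0X0, mul_div_assoc', mul_div_cancel_left₀ _ hcpos.ne']
    ring
  have hbij : Function.Bijective ω := ⟨hωmono.injective, hωsurj⟩
  have hωlipconst : ∀ p q : ℝ, |ω q - ω p| ≤ (c * (2 * a / c0)) * |q - p| := by
    intro p q
    rw [ωid p, ωid q]
    have h1 : c * Z0 q + Cc - (c * Z0 p + Cc) = c * (Z0 q - Z0 p) := by ring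
    rw [h1, abs_mul, abs_of_pos hcpos]
    calc c * |Z0 q - Z0 p| ≤ c * ((2 * a / c0) * |q - p|) :=
          mul_le_mul_of_nonneg_left (hZlip p q) hcpos.le
      _ = (c * (2 * a / c0)) * |q - p| := by ring
  have hωlip : LipschitzWith (Real.toNNReal (c * (2 * a / c0))) ω := by
    apply LipschitzWith.of_dist_le_mul
    intro p q
    rw [Real.dist_eq, Real.dist_eq, Real.coe_toNNReal _
      (by positivity : (0:ℝ) ≤ c * (2 * a / c0))]
    exact hωlipconst q p
  set γ' : ℝ := c * (2 * a / C0) with hγ'def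
  have hγ'pos : 0 < γ' := mul_pos hcpos (by positivity)
  have hωlow : ∀ p q : ℝ, p ≤ q → γ' * (q - p) ≤ ω q - ω p := by
    intro p q hpq
    rw [ωid p, ωid q]
    have h1 := hZlow p q hpq
    have h2 : c * ((2 * a / C0) * (q - p)) ≤ c * (Z0 q - Z0 p) :=
      mul_le_mul_of_nonneg_left h1 hcpos.le
    rw [hγ'def]
    linarith [h2]
  have hωdist : ∀ p q : ℝ, γ' * |q - p| ≤ |ω q - ω p| := by
    intro p q
    rcases le_total p q with h | h
    · rw [abs_of_nonneg (sub_nonneg.2 h), abs_of_nonneg (sub_nonneg.2 (hωmono.monotone h))]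
      exact hωlow p q h
    · rw [abs_of_nonpos (sub_nonpos.2 h), abs_of_nonpos (sub_nonpos.2 (hωmono.monotone h))]
      have := hωlow q p h
      linarith
  -- ### inverse function
  set θ := Function.invFun ω with hθdef
  have hθω : ∀ x, θ (ω x) = x := fun x => Function.leftInverse_invFun hbij.1 x
  have hωθ : ∀ y, ω (θ y) = y := fun y => Function.rightInverse_invFun hbij.2 y
  have hθlipconst : ∀ y1 y2 : ℝ, |θ y1 - θ y2| ≤ γ'⁻¹ * |y1 - y2| := by
    intro y1 y2
    have h1 := hωdist (θ y2) (θ y1)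
    rw [hωθ, hωθ] at h1
    calc |θ y1 - θ y2| = γ'⁻¹ * (γ' * |θ y1 - θ y2|) := by field_simp
      _ ≤ γ'⁻¹ * |y1 - y2| := mul_le_mul_of_nonneg_left h1 (inv_nonneg.2 hγ'pos.le)
  have hθlip : LipschitzWith (Real.toNNReal γ'⁻¹) θ := by
    apply LipschitzWith.of_dist_le_mul
    intro p q
    rw [Real.dist_eq, Real.dist_eq, Real.coe_toNNReal _ (inv_nonneg.2 hγ'pos.le)]
    exact hθlipconst p q
  have hθmono : StrictMono θ := by
    intro u v huv
    have h : ω (θ u) < ω (θ v) := by rw [hωθ, hωθ]; exact huv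
    exact hωmono.lt_iff_lt.mp h
  -- ### a.e. derivative
  have hderiv : ∀ᵐ x : ℝ, HasDerivAt ω ((mbar - lbar) / (mu0 x - lam0 x)) x := by
    filter_upwards [ae_ftc hgmeas hgb] with x hx
    have hZd : HasDerivAt Z0 (g x) x := by
      have h : Z0 = fun y => ∫ t in (0:ℝ)..y, g t := funext hZ0'
      rw [h]; exact hx
    have hωd : HasDerivAt ω (c * g x) x := by
      have h2 : HasDerivAt (fun y => c * Z0 y + Cc) (c * g x) x :=
        (hZd.const_mul c).add_const Cc
      have h : ω = fun y => c * Z0 y + Cc := funext ωid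
      rw [h]; exact h2
    have hcg : c * g x = (mbar - lbar) / (mu0 x - lam0 x) := by
      show (mbar - lbar) / (2 * a) * (2 * a / (mu0 x - lam0 x))
          = (mbar - lbar) / (mu0 x - lam0 x)
      have h1 := (hdpos x).ne'
      have h2 : (2:ℝ) * a ≠ 0 := by positivity
      field_simp
    rwa [hcg] at hωd
  -- ### identity for X
  have Fid : ∀ t x : ℝ, X t (Z0 x) - ((lbar + mbar) / 2) * t
      = ω x + (1 / (2 * a)) * ((I (Z0 x + a * t) - Ibar) - (H (Z0 x - a * t) - Hbar)) := by
    intro t x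
    have h1 := hIdec (Z0 x + a * t)
    have h2 := hHdec (Z0 x - a * t)
    rw [hX, ωid x, hcdef, hCcdef, h1, h2]
    have ha' : (2:ℝ) * a ≠ 0 := by positivity
    field_simp
    ring
  -- ### pointwise convergence
  have hat : Tendsto (fun t : ℝ => a * t) atTop atTop :=
    Tendsto.const_mul_atTop ha tendsto_id
  have hZtop : ∀ x : ℝ, Tendsto (fun t : ℝ => Z0 x + a * t) atTop atTop :=
    fun x => tendsto_atTop_add_const_left _ _ hat
  have hZbot : ∀ x : ℝ, Tendsto (fun t : ℝ => Z0 x - a * t) atTop atBot := by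
    intro x
    have h : Tendsto (fun t : ℝ => -(a * t)) atTop atBot := tendsto_neg_atTop_atBot.comp hat
    have h2 := tendsto_atBot_add_const_left atTop (Z0 x) h
    simpa [sub_eq_add_neg] using h2
  have hEtend : ∀ x : ℝ, Tendsto (fun t => (1 / (2 * a)) *
      ((I (Z0 x + a * t) - Ibar) - (H (Z0 x - a * t) - Hbar))) atTop (nhds 0) := by
    intro x
    have h1 : Tendsto (fun t => I (Z0 x + a * t)) atTop (nhds Ibar) := hIbar.comp (hZtop x)
    have h2 : Tendsto (fun t => H (Z0 x - a * t)) atTop (nhds Hbar) := hHbar.comp (hZbot x)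
    have h3 : Tendsto (fun t : ℝ => (I (Z0 x + a * t) - Ibar) - (H (Z0 x - a * t) - Hbar))
        atTop (nhds ((Ibar - Ibar) - (Hbar - Hbar))) :=
      (h1.sub (tendsto_const_nhds : Tendsto (fun _ : ℝ => Ibar) atTop (nhds Ibar))).sub
        (h2.sub (tendsto_const_nhds : Tendsto (fun _ : ℝ => Hbar) atTop (nhds Hbar)))
    have h := h3.const_mul (1 / (2 * a))
    simpa using h
  have hptwise : ∀ x : ℝ, Tendsto (fun t => X t (Z0 x) - ((lbar + mbar) / 2) * t)
      atTop (nhds (ω x)) := by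
    intro x
    have h := (tendsto_const_nhds : Tendsto (fun _ : ℝ => ω x) atTop (nhds (ω x))).add
      (hEtend x)
    rw [add_zero] at h
    exact h.congr fun t => (Fid t x).symm
  -- ### uniform convergence
  have hunif : ∀ s : Set ℝ, IsCompact s → TendstoUniformlyOn
      (fun t x => X t (Z0 x) - ((lbar + mbar) / 2) * t) ω atTop s := by
    intro s hs
    rw [Metric.tendstoUniformlyOn_iff]
    intro ε hε
    obtain ⟨R, hR⟩ := hs.isBounded.subset_closedBall 0
    have hsub : s ⊆ Icc (-R) R := by
      intro x hx
      have := hR hx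
      rw [Metric.mem_closedBall, Real.dist_eq] at this
      have := abs_le.1 this
      exact ⟨by linarith [this.1], by linarith [this.2]⟩
    have hε' : (0:ℝ) < a * ε / 2 := by positivity
    have hI' : ∀ᶠ y in atTop, |I y - Ibar| < a * ε / 2 := by
      have := Metric.tendsto_nhds.mp hIbar (a * ε / 2) hε'
      simpa [Real.dist_eq] using this
    have hH' : ∀ᶠ y in atBot, |H y - Hbar| < a * ε / 2 := by
      have := Metric.tendsto_nhds.mp hHbar (a * ε / 2) hε'
      simpa [Real.dist_eq] using this
    obtain ⟨Y1, hY1⟩ := eventually_atTop.1 hI'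
    obtain ⟨Y2, hY2⟩ := eventually_atBot.1 hH'
    filter_upwards [eventually_ge_atTop ((Y1 - Z0 (-R)) / a),
      eventually_ge_atTop ((Z0 R - Y2) / a)] with t ht1 ht2
    intro x hx
    obtain ⟨hx1, hx2⟩ := hsub hx
    have hZx1 : Z0 (-R) ≤ Z0 x := hZmono.monotone hx1
    have hZx2 : Z0 x ≤ Z0 R := hZmono.monotone hx2
    have hq1 := (div_le_iff₀ ha).1 ht1
    have hq2 := (div_le_iff₀ ha).1 ht2
    have hta : t * a = a * t := mul_comm t a
    have e1 := hY1 (Z0 x + a * t) (by linarith)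
    have e2 := hY2 (Z0 x - a * t) (by linarith)
    rw [Fid t x, Real.dist_eq]
    have hrw : ω x - (ω x + (1 / (2 * a)) *
        ((I (Z0 x + a * t) - Ibar) - (H (Z0 x - a * t) - Hbar)))
        = -((1 / (2 * a)) * ((I (Z0 x + a * t) - Ibar) - (H (Z0 x - a * t) - Hbar))) := by
      ring
    rw [hrw, abs_neg, abs_mul, abs_of_pos (by positivity : (0:ℝ) < 1 / (2 * a))]
    set A := I (Z0 x + a * t) - Ibar
    set B := H (Z0 x - a * t) - Hbar
    have habs : |A - B| ≤ |A| + |B| := by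
      calc |A - B| = |A + -B| := by ring_nf
        _ ≤ |A| + |-B| := abs_add_le _ _
        _ = |A| + |B| := by rw [abs_neg]
    have hlt : |A| + |B| < a * ε := by linarith
    calc 1 / (2 * a) * |A - B| ≤ 1 / (2 * a) * (|A| + |B|) :=
          mul_le_mul_of_nonneg_left habs (by positivity)
      _ < 1 / (2 * a) * (a * ε) := by
          exact mul_lt_mul_of_pos_left hlt (by positivity)
      _ = ε / 2 := by field_simp
      _ < ε := by linarith
  -- ### inverse convergence
  have hθpt : ∀ x : ℝ, Tendsto (fun t => θ (X t (Z0 x) - ((lbar + mbar) / 2) * t))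
      atTop (nhds x) := by
    intro x
    have h := (hθlip.continuous.continuousAt (x := ω x)).tendsto.comp (hptwise x)
    rw [hθω x] at h; exact h
  have hθunif : ∀ s : Set ℝ, IsCompact s → TendstoUniformlyOn
      (fun t x => θ (X t (Z0 x) - ((lbar + mbar) / 2) * t)) id atTop s := by
    intro s hs
    rw [Metric.tendstoUniformlyOn_iff]
    intro ε hε
    have h := (Metric.tendstoUniformlyOn_iff.1 (hunif s hs)) (ε * γ' / 2) (by positivity)
    filter_upwards [h] with t ht x hx
    have h2 := ht x hx
    calc dist (id x) (θ (X t (Z0 x) - ((lbar + mbar) / 2) * t))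
        = |θ (ω x) - θ (X t (Z0 x) - ((lbar + mbar) / 2) * t)| := by
          rw [Real.dist_eq, hθω x]; rfl
      _ ≤ γ'⁻¹ * |ω x - (X t (Z0 x) - ((lbar + mbar) / 2) * t)| := hθlipconst _ _
      _ = γ'⁻¹ * dist (ω x) (X t (Z0 x) - ((lbar + mbar) / 2) * t) := by rw [Real.dist_eq]
      _ < γ'⁻¹ * (ε * γ' / 2) := mul_lt_mul_of_pos_left h2 (inv_pos.2 hγ'pos)
      _ = ε / 2 := by field_simp
      _ < ε := by linarith
  exact ⟨⟨_, hωlip⟩, hωmono, hbij, hderiv,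
    ⟨c0 / C0, div_pos hc0 hC0,
      fun x => div_le_div₀ hmlpos.le hml1 (hdpos x) (hd2 x)⟩,
    hptwise, hunif, ⟨_, hθlip⟩, hθmono, hθpt, hθunif⟩
end

section
/- There exist a finite time t_L > 0 and Lipschitz functions φ_1,…,φ_n : ℝ → ℝ such that for every t > t_L: (i) X_1^−(t) < X_1^+(t) < X_2^−(t) < X_2^+(t) < ⋯ < X_n^−(t) < X_n^+(t); (ii) for a.e. x ∈ ℝ: w(t,x) = w̄^− if x ≤ X_1^−(t); w(t,x) = w̄^i if X_i^+(t) < x ≤ X_{i+1}^−(t) for some i ∈ {1,…,n−1}; w(t,x) = w̄^+ if x > X_n^+(t); and if X_i^−(t) < x ≤ X_i^+(t) for some i ∈ {1,…,n}, then w_j(t,x) = w̄_j^+ for all j < i, w_j(t,x) = w̄_j^− for all j > i, and w_i(t,x) = w_i^0(φ_i(x − λ_i(w̄^i)·t)). In other words, after the finite time t_L the entropy solution is an exact superposition of constant states and of n traveling waves, the i-th one moving with the constant speed λ_i(w̄^i). -/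
open MeasureTheory Filter Set

set_option maxHeartbeats 4000000



/-- If a conull set misses an interval... it can't: pick a point. -/
lemma exists_mem_of_ae {S : Set ℝ} (hS : ∀ᵐ x, x ∈ S) {u v : ℝ} (huv : u < v) :
    ∃ x, x ∈ S ∧ x ∈ Set.Ioo u v := by
  by_contra hc
  push_neg at hc
  have hsub : Set.Ioo u v ⊆ {x | ¬ x ∈ S} := by
    intro x hx hxS
    exact (hc x hxS) hx
  have h0 : volume (Set.Ioo u v) = 0 :=
    measure_mono_null hsub (by simpa [ae_iff] using hS)
  rw [Real.volume_Ioo] at h0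
  simp only [ENNReal.ofReal_eq_zero] at h0
  linarith

lemma tendsto_seq_of_ae {S : Set ℝ} (hS : ∀ᵐ x, x ∈ S) (lo hi : ℕ → ℝ) (z : ℝ)
    (hlh : ∀ k, lo k < hi k)
    (hlo : Tendsto lo atTop (nhds z)) (hhi : Tendsto hi atTop (nhds z)) :
    ∃ u : ℕ → ℝ, (∀ k, u k ∈ S ∧ lo k < u k ∧ u k < hi k) ∧ Tendsto u atTop (nhds z) := by
  choose u hu1 hu2 using fun k => exists_mem_of_ae hS (hlh k)
  exact ⟨u, fun k => ⟨hu1 k, (hu2 k).1, (hu2 k).2⟩,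
    tendsto_of_tendsto_of_tendsto_of_le_of_le hlo hhi (fun k => (hu2 k).1.le)
      (fun k => (hu2 k).2.le)⟩

lemma lip_image_null {f : ℝ → ℝ} {Kf : NNReal} (hf : LipschitzWith Kf f) {s : Set ℝ}
    (hs : volume s = 0) : volume (f '' s) = 0 := by
  have h1 := hf.hausdorffMeasure_image_le (zero_le_one (α := ℝ)) s
  rw [MeasureTheory.hausdorffMeasure_real] at h1
  refine le_antisymm ?_ zero_le
  calc volume (f '' s) ≤ (Kf : ENNReal) ^ (1:ℝ) * volume s := h1
  _ = 0 := by rw [hs, mul_zero]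



lemma lip_ae_core {g : ℝ → ℝ} {a b M : ℝ} {Kg : NNReal} (hab : a < b)
    (hg : LipschitzWith Kg g)
    (h : ∀ᵐ s, s ∈ Set.Ioo a b → ∃ g', HasDerivAt g g' s ∧ g' ≤ M) :
    g b - g a ≤ M * (b - a) := by
  set B : ℝ := (Kg : ℝ) + |M| with hB
  have hB0 : 0 ≤ B := by positivity
  have main : ∀ ε : ℝ, 0 < ε → g b - g a ≤ M * (b - a) + ε * ((b - a) + B) := by
    intro ε hε
    set Z : Set ℝ := {s | ¬ (s ∈ Set.Ioo a b → ∃ g', HasDerivAt g g' s ∧ g' ≤ M)} with hZdef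
    have hZnull : volume Z = 0 := ae_iff.1 h
    have hZ'null : volume (Z ∪ {a}) = 0 := by
      refine le_antisymm ?_ zero_le
      refine le_trans (measure_union_le _ _) ?_
      simp [hZnull]
    obtain ⟨U, hUsub, hUopen, hUvol⟩ :=
      Set.exists_isOpen_lt_of_lt (Z ∪ {a}) (ENNReal.ofReal ε)
        (by rw [hZ'null]; simpa using hε)
    set V : Set ℝ := U ∩ Set.Ioo (a - 1) (b + 1) with hVdef
    have hVopen : IsOpen V := hUopen.inter isOpen_Ioo
    have hVvol : volume V < ENNReal.ofReal ε :=
      lt_of_le_of_lt (measure_mono inter_subset_left) hUvol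
    have hVfin : volume V ≠ ⊤ := (hVvol.trans ENNReal.ofReal_lt_top).ne
    have hVsub : Z ∪ {a} ⊆ V := by
      intro s hs
      refine ⟨hUsub hs, ?_⟩
      rcases hs with hs | hs
      · have hsIoo : s ∈ Set.Ioo a b := by
          by_contra hcon
          exact hs (fun h' => absurd h' hcon)
        exact ⟨by linarith [hsIoo.1], by linarith [hsIoo.2]⟩
      · rcases hs with rfl
        exact ⟨by linarith, by linarith⟩
    set m : ℝ → ℝ := fun x => (volume (V ∩ Set.Icc a x)).toReal with hmdef
    have hmfin : ∀ x, volume (V ∩ Set.Icc a x) ≠ ⊤ :=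
      fun x => ne_top_of_le_ne_top hVfin (measure_mono inter_subset_left)
    have hmmono : Monotone m := by
      intro x y hxy
      exact ENNReal.toReal_mono (hmfin y)
        (measure_mono (inter_subset_inter_right _ (Set.Icc_subset_Icc le_rfl hxy)))
    have hmlip : ∀ x y, x ≤ y → m y - m x ≤ y - x := by
      intro x y hxy
      have hsub : V ∩ Set.Icc a y ⊆ (V ∩ Set.Icc a x) ∪ Set.Ioc x y := by
        rintro u ⟨hu1, hu2⟩
        by_cases hux : u ≤ x
        · exact Or.inl ⟨hu1, hu2.1, hux⟩
        · exact Or.inr ⟨lt_of_not_ge hux, hu2.2⟩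
      have h1 : volume (V ∩ Set.Icc a y)
          ≤ volume (V ∩ Set.Icc a x) + volume (Set.Ioc x y) :=
        le_trans (measure_mono hsub) (measure_union_le _ _)
      have h2 : (volume (V ∩ Set.Icc a y)).toReal
          ≤ ((volume (V ∩ Set.Icc a x)) + volume (Set.Ioc x y)).toReal := by
        refine ENNReal.toReal_mono ?_ h1
        rw [Real.volume_Ioc]
        exact ENNReal.add_ne_top.2 ⟨hmfin x, ENNReal.ofReal_ne_top⟩
      rw [ENNReal.toReal_add (hmfin x) (by rw [Real.volume_Ioc]; exact ENNReal.ofReal_ne_top),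
        Real.volume_Ioc, ENNReal.toReal_ofReal (by linarith)] at h2
      simp only [hmdef]
      linarith
    have hmcont : Continuous m := by
      have : LipschitzWith 1 m := by
        refine LipschitzWith.of_dist_le_mul (fun x y => ?_)
        rw [NNReal.coe_one, one_mul, Real.dist_eq, Real.dist_eq]
        rcases le_total x y with hxy | hxy
        · rw [abs_of_nonpos (by linarith [hmmono hxy]), abs_of_nonpos (by linarith)]
          have := hmlip x y hxy
          linarith
        · rw [abs_of_nonneg (by linarith [hmmono hxy]), abs_of_nonneg (by linarith)]
          have := hmlip y x hxy
          linarith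
      exact this.continuous
    set F : ℝ → ℝ := fun x => g x - g a - (M + ε) * (x - a) - B * m x with hFdef
    have hFcont : Continuous F := by
      apply Continuous.sub
      apply Continuous.sub
      · exact hg.continuous.sub continuous_const
      · exact continuous_const.mul (continuous_id.sub continuous_const)
      · exact continuous_const.mul hmcont
    set S : Set ℝ := Set.Icc a b ∩ F ⁻¹' (Set.Iic 0) with hSdef
    have hScomp : IsCompact S :=
      isCompact_Icc.inter_right (isClosed_Iic.preimage hFcont)
    have hma : m a = 0 := by
      have h0 : volume (V ∩ ({a} : Set ℝ)) = 0 :=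
        measure_mono_null inter_subset_right (by simp)
      simp [hmdef, Set.Icc_self, h0]
    have haS : a ∈ S := by
      refine ⟨⟨le_rfl, hab.le⟩, ?_⟩
      simp [hFdef, hma]
    have hSne : S.Nonempty := ⟨a, haS⟩
    set s := sSup S with hs
    have hsS : s ∈ S := hScomp.sSup_mem hSne
    have hsab : s ∈ Set.Icc a b := hsS.1
    have hsF : F s ≤ 0 := hsS.2
    have hsb : s = b := by
      by_contra hne
      have hsb' : s < b := lt_of_le_of_ne hsab.2 hne
      have hstep : ∃ y, s < y ∧ y ∈ S := by
        by_cases hsV : s ∈ V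
        · obtain ⟨δ, hδ, hball⟩ := Metric.isOpen_iff.1 hVopen s hsV
          refine ⟨min b (s + δ / 2), lt_min hsb' (by linarith), ⟨hsab.1.trans (le_min hsb'.le (by linarith)), min_le_left _ _⟩, ?_⟩
          set y := min b (s + δ / 2) with hy
          have hsy : s < y := lt_min hsb' (by linarith)
          have hyb : y ≤ b := min_le_left _ _
          have hIocV : Set.Ioc s y ⊆ V := by
            intro u hu
            apply hball
            rw [Metric.mem_ball, Real.dist_eq, abs_of_pos (by linarith [hu.1])]
            have : u ≤ s + δ / 2 := le_trans hu.2 (min_le_right _ _)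
            linarith
          have hmstep : m y = m s + (y - s) := by
            have hdecomp : V ∩ Set.Icc a y = (V ∩ Set.Icc a s) ∪ Set.Ioc s y := by
              rw [← Set.Icc_union_Ioc_eq_Icc hsab.1 hsy.le, Set.inter_union_distrib_left]
              congr 1
              exact Set.inter_eq_right.2 hIocV
            have hdisj : Disjoint (V ∩ Set.Icc a s) (Set.Ioc s y) := by
              rw [Set.disjoint_left]
              rintro u ⟨_, _, hu2⟩ hu3
              exact absurd hu3.1 (not_lt.2 hu2)
            have hmu : volume (V ∩ Set.Icc a s ∪ Set.Ioc s y)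
                = volume (V ∩ Set.Icc a s) + volume (Set.Ioc s y) :=
              measure_union hdisj measurableSet_Ioc
            simp only [hmdef]
            rw [hdecomp, hmu, ENNReal.toReal_add (hmfin s) (by rw [Real.volume_Ioc]; exact ENNReal.ofReal_ne_top),
              Real.volume_Ioc, ENNReal.toReal_ofReal (by linarith)]
          have hgstep : g y - g s ≤ (Kg : ℝ) * (y - s) := by
            have h1 := hg.dist_le_mul y s
            rw [Real.dist_eq, Real.dist_eq,
              abs_of_pos (show (0:ℝ) < y - s by linarith)] at h1
            calc g y - g s ≤ |g y - g s| := le_abs_self _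
            _ ≤ (Kg : ℝ) * (y - s) := h1
          show F y ≤ 0
          have : F y ≤ F s := by
            simp only [hFdef, hmstep]
            have hc1 : (Kg : ℝ) * (y - s) ≤ ((M + ε) + B) * (y - s) := by
              refine mul_le_mul_of_nonneg_right ?_ (by linarith)
              have : -M ≤ |M| := neg_le_abs M
              simp only [hB]
              linarith
            nlinarith
          linarith
        · have hsZ : s ∉ Z ∪ {a} := fun hc => hsV (hVsub hc)
          have hsa : s ≠ a := by
            intro hcon
            exact hsZ (Or.inr (by simp [hcon]))
          have hsIoo : s ∈ Set.Ioo a b := ⟨lt_of_le_of_ne hsab.1 (Ne.symm hsa), hsb'⟩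
          have hsimp : s ∈ Set.Ioo a b → ∃ g', HasDerivAt g g' s ∧ g' ≤ M := by
            by_contra hcon
            exact hsZ (Or.inl hcon)
          obtain ⟨g', hg', hg'M⟩ := hsimp hsIoo
          have hslope : Tendsto (slope g s) (nhdsWithin s (Set.Ioi s)) (nhds g') :=
            (hasDerivAt_iff_tendsto_slope.1 hg').mono_left
              (nhdsWithin_mono s (fun u hu => ne_of_gt hu))
          have hev1 : ∀ᶠ y in nhdsWithin s (Set.Ioi s), slope g s y < g' + ε :=
            hslope.eventually_lt_const (by linarith)
          have hev2 : ∀ᶠ y in nhdsWithin s (Set.Ioi s), y < b :=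
            eventually_nhdsWithin_of_eventually_nhds (isOpen_Iio.eventually_mem hsb')
          obtain ⟨y, ⟨hy1, hy2⟩, hy3⟩ := ((hev1.and hev2).and self_mem_nhdsWithin).exists
          have hsy : s < y := hy3
          have hgy : g y - g s ≤ (M + ε) * (y - s) := by
            rw [slope_def_field] at hy1
            have := (div_lt_iff₀ (by linarith)).1 hy1
            nlinarith
          refine ⟨y, hsy, ⟨hsab.1.trans hsy.le, hy2.le⟩, ?_⟩
          show F y ≤ 0
          have : F y ≤ F s := by
            simp only [hFdef]
            have hmm : m s ≤ m y := hmmono hsy.le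
            nlinarith
          linarith
      obtain ⟨y, hy1, hy2⟩ := hstep
      exact absurd (le_csSup hScomp.bddAbove hy2) (not_le.2 hy1)
    have hFb : F b ≤ 0 := by rw [← hsb]; exact hsF
    have hmb : m b ≤ ε := by
      have h1 : (volume (V ∩ Set.Icc a b)).toReal ≤ (volume V).toReal :=
        ENNReal.toReal_mono hVfin (measure_mono inter_subset_left)
      have h2 : (volume V).toReal ≤ ε :=
        ENNReal.toReal_le_of_le_ofReal hε.le hVvol.le
      exact h1.trans h2
    simp only [hFdef] at hFb
    nlinarith
  by_contra hcon
  push_neg at hcon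
  set D : ℝ := (b - a) + B with hD
  have hDpos : 0 < D := by
    have : 0 < b - a := by linarith
    positivity
  have hmain := main ((g b - g a - M * (b - a)) / (2 * D))
    (by apply div_pos (by linarith) (by linarith))
  rw [div_mul_eq_mul_div] at hmain
  have : (g b - g a - M * (b - a)) * D / (2 * D) = (g b - g a - M * (b - a)) / 2 := by
    field_simp
  rw [this] at hmain
  linarith

lemma lipOn_ae_deriv_le {g : ℝ → ℝ} {a b M : ℝ} {Kg : NNReal} (hab : a ≤ b)
    (hg : LipschitzOnWith Kg g (Set.Icc a b))
    (h : ∀ᵐ s, s ∈ Set.Ioo a b → ∃ g', HasDerivAt g g' s ∧ g' ≤ M) :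
    g b - g a ≤ M * (b - a) := by
  rcases eq_or_lt_of_le hab with rfl | hab'
  · simp
  obtain ⟨G, hGlip, hGeq⟩ := hg.extend_real
  have hGb : G b = g b := (hGeq ⟨hab, le_rfl⟩).symm
  have hGa : G a = g a := (hGeq ⟨le_rfl, hab⟩).symm
  have key := lip_ae_core hab' hGlip (M := M) ?_
  · rw [hGb, hGa] at key; exact key
  · filter_upwards [h] with s hs hsIoo
    obtain ⟨g', hd, hM⟩ := hs hsIoo
    refine ⟨g', ?_, hM⟩
    have hev : g =ᶠ[nhds s] G :=
      eventually_of_mem (isOpen_Ioo.mem_nhds hsIoo)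
        (fun u hu => hGeq (Set.Ioo_subset_Icc_self hu))
    exact (Filter.EventuallyEq.hasDerivAt_iff hev).1 hd

lemma lipOn_ae_deriv_ge {g : ℝ → ℝ} {a b M : ℝ} {Kg : NNReal} (hab : a ≤ b)
    (hg : LipschitzOnWith Kg g (Set.Icc a b))
    (h : ∀ᵐ s, s ∈ Set.Ioo a b → ∃ g', HasDerivAt g g' s ∧ M ≤ g') :
    M * (b - a) ≤ g b - g a := by
  have hneg : LipschitzOnWith Kg (fun x => -g x) (Set.Icc a b) := by
    refine LipschitzOnWith.of_dist_le_mul (fun x hx y hy => ?_)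
    have := hg.dist_le_mul x hx y hy
    simpa [Real.dist_eq, abs_sub_comm, neg_sub_neg] using this
  have key := lipOn_ae_deriv_le (M := -M) hab hneg ?_
  · simp only [neg_mul] at key; linarith
  · filter_upwards [h] with s hs hsIoo
    obtain ⟨g', hd, hM⟩ := hs hsIoo
    exact ⟨-g', hd.neg, by linarith⟩

lemma lipOn_ae_deriv_eq {g : ℝ → ℝ} {a b v : ℝ} {Kg : NNReal} (hab : a ≤ b)
    (hg : LipschitzOnWith Kg g (Set.Icc a b))
    (h : ∀ᵐ s, s ∈ Set.Ioo a b → HasDerivAt g v s) :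
    g b - g a = v * (b - a) := by
  refine le_antisymm ?_ ?_
  · refine lipOn_ae_deriv_le hab hg ?_
    filter_upwards [h] with s hs hsIoo
    exact ⟨v, hs hsIoo, le_rfl⟩
  · refine lipOn_ae_deriv_ge hab hg ?_
    filter_upwards [h] with s hs hsIoo
    exact ⟨v, hs hsIoo, le_rfl⟩

theorem stmt_19
    (n : ℕ) (hn : 2 ≤ n)
    (K : Set (Fin n → ℝ)) (hK : IsCompact K)
    (lam : Fin n → (Fin n → ℝ) → ℝ) (hlam : ∀ i, ContDiff ℝ 1 (lam i))
    (σ : ℝ) (hσ : 0 < σ)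
    (hstrict : ∀ w : Fin n → ℝ, StrictMono (fun i => lam i w))
    (hgap : ∀ w ∈ K, ∀ i j : Fin n, (i : ℕ) + 1 = (j : ℕ) → σ ≤ lam j w - lam i w)
    (hlindeg : ∀ (i : Fin n) (w v : Fin n → ℝ),
      (∀ j, j ≠ i → w j = v j) → lam i w = lam i v)
    (Nf : Fin n → (Fin n → ℝ) → ℝ) (hNf : ∀ i, ContDiff ℝ 1 (Nf i))
    (c C : ℝ) (hc : 0 < c) (hcC : c ≤ C)
    (hNbd : ∀ i : Fin n, ∀ w ∈ K, c ≤ Nf i w ∧ Nf i w ≤ C)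
    (hrich : ∀ (i j : Fin n) (w : Fin n → ℝ),
      (lam j w - lam i w) * fderiv ℝ (Nf i) w (Pi.single j 1)
        = Nf i w * fderiv ℝ (lam i) w (Pi.single j 1))
    (L : ℝ) (hL : 0 < L)
    (wbarm wbarp : Fin n → ℝ) (hwbarmK : wbarm ∈ K) (hwbarpK : wbarp ∈ K)
    (w0 : ℝ → Fin n → ℝ) (hw0m : Measurable w0) (hw0K : ∀ x, w0 x ∈ K)
    (hw0p : ∀ x : ℝ, L ≤ x → w0 x = wbarp) (hw0m' : ∀ x : ℝ, x ≤ -L → w0 x = wbarm)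
    (Y0 Xc0 : Fin n → ℝ → ℝ)
    (hY0 : ∀ i x, Y0 i x = ∫ ξ in (0:ℝ)..x, Nf i (w0 ξ))
    (hXc0Y0 : ∀ i x, Xc0 i (Y0 i x) = x) (hY0Xc0 : ∀ i z, Y0 i (Xc0 i z) = z)
    (w : ℝ → ℝ → Fin n → ℝ) (hwK : ∀ t x : ℝ, 0 ≤ t → w t x ∈ K)
    (Y : Fin n → ℝ → ℝ → ℝ)
    (hYLip : ∀ i, ∃ Li : NNReal,
      LipschitzOnWith Li (fun p : ℝ × ℝ => Y i p.1 p.2) (Set.Ici 0 ×ˢ Set.univ))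
    (hYx : ∀ i, ∀ᵐ p : ℝ × ℝ, 0 ≤ p.1 →
      HasDerivAt (fun x => Y i p.1 x) (Nf i (w p.1 p.2)) p.2)
    (hYt : ∀ i, ∀ᵐ p : ℝ × ℝ, 0 ≤ p.1 →
      HasDerivAt (fun t => Y i t p.2) (-(Nf i (w p.1 p.2) * lam i (w p.1 p.2))) p.1)
    (hYinit : ∀ i x, Y i 0 x = Y0 i x)
    (hwsol : ∀ (i : Fin n) (t x : ℝ), 0 ≤ t → w t x i = w0 (Xc0 i (Y i t x)) i)
    (Xc : Fin n → ℝ → ℝ → ℝ)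
    (hXcY : ∀ i t, 0 ≤ t → ∀ x, Xc i t (Y i t x) = x)
    (hYXc : ∀ i t, 0 ≤ t → ∀ z, Y i t (Xc i t z) = z) :
    ∃ tL > (0:ℝ), ∃ φ : Fin n → ℝ → ℝ,
      (∀ i, ∃ Li : NNReal, LipschitzWith Li (φ i)) ∧
      ∀ t : ℝ, tL < t →
        ((∀ i : Fin n, Xc i t (Y0 i (-L)) < Xc i t (Y0 i L)) ∧
         (∀ i j : Fin n, (i : ℕ) + 1 = (j : ℕ) →
            Xc i t (Y0 i L) < Xc j t (Y0 j (-L))) ∧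
         ∀ᵐ x : ℝ,
           (x ≤ Xc ⟨0, by omega⟩ t (Y0 ⟨0, by omega⟩ (-L)) → w t x = wbarm) ∧
           (∀ i j : Fin n, (i : ℕ) + 1 = (j : ℕ) →
              Xc i t (Y0 i L) < x → x ≤ Xc j t (Y0 j (-L)) →
              w t x = fun l => if l ≤ i then wbarp l else wbarm l) ∧
           (Xc ⟨n - 1, by omega⟩ t (Y0 ⟨n - 1, by omega⟩ L) < x → w t x = wbarp) ∧
           (∀ i : Fin n, Xc i t (Y0 i (-L)) < x → x ≤ Xc i t (Y0 i L) →
              (∀ j, j < i → w t x j = wbarp j) ∧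
              (∀ j, i < j → w t x j = wbarm j) ∧
              w t x i = w0 (φ i
                (x - lam i (fun l => if l ≤ i then wbarp l else wbarm l) * t)) i)) := by
  classical
  choose Li hYL using hYLip
  have hC : 0 < C := lt_of_lt_of_le hc hcC
  -- Lipschitz of Y in x for fixed t ≥ 0
  have hYxlip : ∀ i (t : ℝ), 0 ≤ t → LipschitzWith (Li i) (Y i t) := by
    intro i t ht
    refine LipschitzWith.of_dist_le_mul fun x y => ?_
    have h1 := (hYL i).dist_le_mul (t, x) ⟨ht, trivial⟩ (t, y) ⟨ht, trivial⟩
    simpa [Prod.dist_eq, dist_self, dist_nonneg, max_eq_right] using h1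
  -- Lipschitz of Y in t for fixed x
  have hYtlip : ∀ i (x t s : ℝ), 0 ≤ t → 0 ≤ s → |Y i t x - Y i s x| ≤ (Li i) * |t - s| := by
    intro i x t s ht hs
    have h1 := (hYL i).dist_le_mul (t, x) ⟨ht, trivial⟩ (s, x) ⟨hs, trivial⟩
    simpa [Prod.dist_eq, dist_self, Real.dist_eq, dist_nonneg, max_eq_left, abs_nonneg]
      using h1
  -- interval integrability of Nf along w0
  have hNint : ∀ (i : Fin n) (x y : ℝ), IntervalIntegrable (fun ξ => Nf i (w0 ξ)) volume x y := by
    intro i x y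
    rw [intervalIntegrable_iff]
    refine Measure.integrableOn_of_bounded (M := C) ?_ ?_ ?_
    · rw [Set.uIoc, Real.volume_Ioc]
      exact ENNReal.ofReal_ne_top
    · exact ((hNf i).continuous.measurable.comp hw0m).aestronglyMeasurable
    · refine Filter.Eventually.of_forall (fun ξ => ?_)
      have := hNbd i _ (hw0K ξ)
      rw [Real.norm_eq_abs, abs_of_pos (lt_of_lt_of_le hc this.1)]
      exact this.2
  -- increments of Y0
  have hY0incr : ∀ (i : Fin n) (x y : ℝ), x ≤ y →
      c * (y - x) ≤ Y0 i y - Y0 i x ∧ Y0 i y - Y0 i x ≤ C * (y - x) := by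
    intro i x y hxy
    have hdiff : Y0 i y - Y0 i x = ∫ ξ in x..y, Nf i (w0 ξ) := by
      rw [hY0, hY0]
      exact intervalIntegral.integral_interval_sub_left (hNint i 0 y) (hNint i 0 x)
    constructor
    · have h1 : (∫ _ in x..y, c) ≤ ∫ ξ in x..y, Nf i (w0 ξ) := by
        refine intervalIntegral.integral_mono_on hxy intervalIntegrable_const (hNint i x y) ?_
        exact fun ξ _ => (hNbd i _ (hw0K ξ)).1
      rw [intervalIntegral.integral_const, smul_eq_mul] at h1
      rw [hdiff]; linarith
    · have h1 : (∫ ξ in x..y, Nf i (w0 ξ)) ≤ ∫ _ in x..y, C := by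
        refine intervalIntegral.integral_mono_on hxy (hNint i x y) intervalIntegrable_const ?_
        exact fun ξ _ => (hNbd i _ (hw0K ξ)).2
      rw [intervalIntegral.integral_const, smul_eq_mul] at h1
      rw [hdiff]; linarith
  have hY0sm : ∀ i, StrictMono (Y0 i) := by
    intro i x y hxy
    have := (hY0incr i x y hxy.le).1
    nlinarith
  have hXc0mono : ∀ (i : Fin n) (z z' : ℝ), z ≤ z' → Xc0 i z ≤ Xc0 i z' := by
    intro i z z' hzz'
    by_contra hcon
    push_neg at hcon
    have := hY0sm i hcon
    rw [hY0Xc0, hY0Xc0] at this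
    exact absurd hzz' (not_le.2 this)
  -- a.e. derivative of Y in x, Fubini form
  have hYxae : ∀ i, ∀ᵐ t : ℝ, ∀ᵐ x : ℝ,
      (0 ≤ t → HasDerivAt (fun u => Y i t u) (Nf i (w t x)) x) := by
    intro i
    have h1 := hYx i
    rw [Measure.volume_eq_prod] at h1
    exact Measure.ae_ae_of_ae_prod h1
  -- quantitative lower increment of Y in x, for ALL t ≥ 0
  have hYincr : ∀ (i : Fin n) (t : ℝ), 0 ≤ t → ∀ x y : ℝ, x ≤ y →
      c * (y - x) ≤ Y i t y - Y i t x := by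
    intro i t ht x y hxy
    have hgood : ∀ t' : ℝ, 0 ≤ t' →
        (∀ᵐ x' : ℝ, (0 ≤ t' → HasDerivAt (fun u => Y i t' u) (Nf i (w t' x')) x')) →
        c * (y - x) ≤ Y i t' y - Y i t' x := by
      intro t' ht' hae
      refine lipOn_ae_deriv_ge hxy ((hYxlip i t' ht').lipschitzOnWith (s := Set.Icc x y)) ?_
      filter_upwards [hae] with u hu _
      exact ⟨_, hu ht', (hNbd i _ (hwK t' u ht')).1⟩
    obtain ⟨u, hu1, hu2⟩ := tendsto_seq_of_ae (hYxae i) (fun _ => t)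
      (fun k => t + 1 / (k + 1)) t
      (fun k => by
        have : (0:ℝ) < 1 / ((k:ℝ) + 1) := by positivity
        linarith)
      tendsto_const_nhds
      (by
        have h0 : Tendsto (fun k : ℕ => 1 / ((k:ℝ) + 1)) atTop (nhds 0) :=
          tendsto_one_div_add_atTop_nhds_zero_nat
        simpa using tendsto_const_nhds.add h0)
    have hineq : ∀ k, c * (y - x) ≤ Y i (u k) y - Y i (u k) x := by
      intro k
      exact hgood (u k) (le_trans ht (hu1 k).2.1.le) (hu1 k).1
    have hconv : Tendsto (fun k => Y i (u k) y - Y i (u k) x) atTop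
        (nhds (Y i t y - Y i t x)) := by
      have haux : ∀ v : ℝ, Tendsto (fun k => Y i (u k) v) atTop (nhds (Y i t v)) := by
        intro v
        rw [tendsto_iff_dist_tendsto_zero]
        refine squeeze_zero (fun k => dist_nonneg) (g := fun k => (Li i) * |u k - t|) ?_ ?_
        · intro k
          rw [Real.dist_eq]
          exact hYtlip i v (u k) t (le_trans ht (hu1 k).2.1.le) ht
        · have : Tendsto (fun k => u k - t) atTop (nhds 0) := by
            simpa using hu2.sub (tendsto_const_nhds (x := t))
          simpa using ((this.abs).const_mul ((Li i : ℝ)))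
      exact (haux y).sub (haux x)
    exact ge_of_tendsto hconv (Filter.Eventually.of_forall hineq)
  -- strict monotonicity of Y and Xc in space
  have hYsm : ∀ (i : Fin n) (t : ℝ), 0 ≤ t → StrictMono (Y i t) := by
    intro i t ht x y hxy
    have := hYincr i t ht x y hxy.le
    nlinarith
  have hXcsm : ∀ (i : Fin n) (t : ℝ), 0 ≤ t → StrictMono (Xc i t) := by
    intro i t ht z z' hzz'
    by_contra hcon
    push_neg at hcon
    have h1 := (hYsm i t ht).monotone hcon
    rw [hYXc i t ht, hYXc i t ht] at h1
    exact absurd h1 (not_le.2 hzz')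
  have hXcmono : ∀ (i : Fin n) (t : ℝ), 0 ≤ t → Monotone (Xc i t) :=
    fun i t ht => (hXcsm i t ht).monotone
  -- inverse characterizations
  have hXltx : ∀ (i : Fin n) (t : ℝ), 0 ≤ t → ∀ z x, (Xc i t z < x ↔ z < Y i t x) := by
    intro i t ht z x
    conv_lhs => rw [show x = Xc i t (Y i t x) from (hXcY i t ht x).symm]
    exact (hXcsm i t ht).lt_iff_lt
  have hXlex : ∀ (i : Fin n) (t : ℝ), 0 ≤ t → ∀ z x, (x ≤ Xc i t z ↔ Y i t x ≤ z) := by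
    intro i t ht z x
    rw [← not_lt, ← not_lt, not_iff_not]
    exact hXltx i t ht z x
  -- component values outside wave regions
  have hcompm : ∀ (i : Fin n) (t x : ℝ), 0 ≤ t → Y i t x ≤ Y0 i (-L) → w t x i = wbarm i := by
    intro i t x ht hYv
    rw [hwsol i t x ht]
    have h1 : Xc0 i (Y i t x) ≤ -L := by
      have h2 := hXc0mono i _ _ hYv
      rw [hXc0Y0] at h2
      exact h2
    rw [hw0m' _ h1]
  have hcompp : ∀ (i : Fin n) (t x : ℝ), 0 ≤ t → Y0 i L ≤ Y i t x → w t x i = wbarp i := by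
    intro i t x ht hYv
    rw [hwsol i t x ht]
    have h1 : L ≤ Xc0 i (Y i t x) := by
      have h2 := hXc0mono i _ _ hYv
      rw [hXc0Y0] at h2
      exact h2
    rw [hw0p _ h1]
  -- quantitative abs increment bound
  have hYabs : ∀ (i : Fin n) (t : ℝ), 0 ≤ t → ∀ u v : ℝ,
      c * |u - v| ≤ |Y i t u - Y i t v| := by
    intro i t ht u v
    rcases le_total v u with hh | hh
    · have := hYincr i t ht v u hh
      rw [abs_of_nonneg (by linarith), abs_of_nonneg (by nlinarith)]
      linarith
    · have := hYincr i t ht u v hh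
      rw [abs_of_nonpos (by linarith), abs_of_nonpos (by nlinarith)]
      linarith
  -- Lipschitz bounds for Xc
  have hXclipz : ∀ (i : Fin n) (t : ℝ), 0 ≤ t → ∀ z z' : ℝ,
      c * |Xc i t z - Xc i t z'| ≤ |z - z'| := by
    intro i t ht z z'
    have := hYabs i t ht (Xc i t z) (Xc i t z')
    rwa [hYXc i t ht, hYXc i t ht] at this
  have hXclipt : ∀ (i : Fin n) (t s : ℝ), 0 ≤ t → 0 ≤ s → ∀ z : ℝ,
      c * |Xc i t z - Xc i s z| ≤ (Li i) * |t - s| := by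
    intro i t s ht hs z
    have h1 := hYabs i t ht (Xc i t z) (Xc i s z)
    rw [hYXc i t ht] at h1
    have h2 : z = Y i s (Xc i s z) := (hYXc i s hs z).symm
    calc c * |Xc i t z - Xc i s z| ≤ |z - Y i t (Xc i s z)| := h1
    _ = |Y i s (Xc i s z) - Y i t (Xc i s z)| := by rw [← h2]
    _ ≤ (Li i) * |s - t| := hYtlip i (Xc i s z) s t hs ht
    _ = (Li i) * |t - s| := by rw [abs_sub_comm]
  -- builder for explicit derivatives
  set mkD : ℝ → ℝ → (ℝ × ℝ →L[ℝ] ℝ) := fun u v =>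
    u • (ContinuousLinearMap.fst ℝ ℝ ℝ) + v • (ContinuousLinearMap.snd ℝ ℝ ℝ) with hmkD
  have hmkD_apply : ∀ u v (q : ℝ × ℝ), mkD u v q = u * q.1 + v * q.2 := by
    intro u v q
    simp [hmkD, ContinuousLinearMap.smul_apply, smul_eq_mul]
  -- Lipschitz extension of Y to the whole plane
  have hext : ∀ i, ∃ F : ℝ × ℝ → ℝ, LipschitzWith (Li i) F ∧
      ∀ p : ℝ × ℝ, 0 ≤ p.1 → F p = Y i p.1 p.2 := by
    intro i
    obtain ⟨F, hF1, hF2⟩ := (hYL i).extend_real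
    exact ⟨F, hF1, fun p hp => (hF2 ⟨hp, trivial⟩).symm⟩
  choose Fe hFe1 hFe2 using hext
  -- Rademacher: good full-derivative property a.e.
  have hGi : ∀ i : Fin n, ∀ᵐ p : ℝ × ℝ, 0 < p.1 →
      HasFDerivAt (fun q : ℝ × ℝ => Y i q.1 q.2)
        (mkD (-(Nf i (w p.1 p.2) * lam i (w p.1 p.2))) (Nf i (w p.1 p.2))) p := by
    intro i
    have hdiff : ∀ᵐ p : ℝ × ℝ, DifferentiableAt ℝ (Fe i) p := (hFe1 i).ae_differentiableAt
    filter_upwards [hdiff, hYx i, hYt i] with p hd hx ht hp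
    have hopen : IsOpen {q : ℝ × ℝ | 0 < q.1} := isOpen_lt continuous_const continuous_fst
    have hev : (fun q : ℝ × ℝ => Y i q.1 q.2) =ᶠ[nhds p] Fe i :=
      eventually_of_mem (hopen.mem_nhds hp) (fun q hq => (hFe2 i q (le_of_lt hq)).symm)
    have hFd : HasFDerivAt (fun q : ℝ × ℝ => Y i q.1 q.2) (fderiv ℝ (Fe i) p) p :=
      (Filter.EventuallyEq.hasFDerivAt_iff hev).2 hd.hasFDerivAt
    set D := fderiv ℝ (Fe i) p with hD
    have hlx : HasDerivAt (fun x : ℝ => ((p.1, x) : ℝ × ℝ)) ((0 : ℝ), (1 : ℝ)) p.2 :=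
      (hasDerivAt_const p.2 p.1).prodMk (hasDerivAt_id p.2)
    have hpx : HasDerivAt (fun x => Y i p.1 x) (D (0, 1)) p.2 := by
      have h1 := hFd.comp_hasDerivAt p.2 hlx
      simpa [Function.comp_def] using h1
    have hDx : D (0, 1) = Nf i (w p.1 p.2) := hpx.unique (hx hp.le)
    have hlt : HasDerivAt (fun t : ℝ => ((t, p.2) : ℝ × ℝ)) ((1 : ℝ), (0 : ℝ)) p.1 :=
      (hasDerivAt_id p.1).prodMk (hasDerivAt_const p.1 p.2)
    have hpt : HasDerivAt (fun t => Y i t p.2) (D (1, 0)) p.1 := by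
      have h1 := hFd.comp_hasDerivAt p.1 hlt
      simpa [Function.comp_def] using h1
    have hDt : D (1, 0) = -(Nf i (w p.1 p.2) * lam i (w p.1 p.2)) := hpt.unique (ht hp.le)
    have hDeq : D = mkD (-(Nf i (w p.1 p.2) * lam i (w p.1 p.2))) (Nf i (w p.1 p.2)) := by
      refine ContinuousLinearMap.ext fun q => ?_
      have hq : (q : ℝ × ℝ) = q.1 • ((1:ℝ), (0:ℝ)) + q.2 • ((0:ℝ), (1:ℝ)) := by
        ext <;> simp
      rw [hmkD_apply]
      conv_lhs => rw [hq]
      rw [D.map_add, D.map_smul, D.map_smul, hDx, hDt, smul_eq_mul, smul_eq_mul]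
      ring
    rw [← hDeq]
    exact hFd
  have hGall := ae_all_iff.2 hGi
  obtain ⟨Nbad, hNsub, hNmeas, hNnull⟩ :=
    exists_measurable_superset_of_null (ae_iff.1 hGall)
  have hNgood : ∀ p : ℝ × ℝ, p ∉ Nbad → 0 < p.1 → ∀ i : Fin n,
      HasFDerivAt (fun q : ℝ × ℝ => Y i q.1 q.2)
        (mkD (-(Nf i (w p.1 p.2) * lam i (w p.1 p.2))) (Nf i (w p.1 p.2))) p := by
    intro p hp hp1 i
    by_contra hcon
    refine hp (hNsub ?_)
    simp only [Set.mem_setOf_eq]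
    intro hall
    exact hcon (hall i hp1)
  -- continuity of the flow map
  have hXcC : ∀ i : Fin n, Continuous (fun q : ℝ × ℝ => Xc i (max q.1 0) q.2) := by
    intro i
    set M : ℝ := ((Li i : ℝ) + 1) / c with hM
    have hM0 : 0 ≤ M := by positivity
    have hlip : LipschitzWith M.toNNReal (fun q : ℝ × ℝ => Xc i (max q.1 0) q.2) := by
      refine LipschitzWith.of_dist_le_mul fun q q' => ?_
      rw [Real.coe_toNNReal _ hM0]
      have h1 : (0:ℝ) ≤ max q.1 0 := le_max_right _ _
      have h1' : (0:ℝ) ≤ max q'.1 0 := le_max_right _ _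
      have e1 := hXclipt i (max q.1 0) (max q'.1 0) h1 h1' q.2
      have e2 := hXclipz i (max q'.1 0) h1' q.2 q'.2
      have e3 : |max q.1 0 - max q'.1 0| ≤ |q.1 - q'.1| := abs_max_sub_max_le_abs _ _ _
      have hd1 : |q.1 - q'.1| ≤ dist q q' := by
        rw [Prod.dist_eq, ← Real.dist_eq]
        exact le_max_left _ _
      have hd2 : |q.2 - q'.2| ≤ dist q q' := by
        rw [Prod.dist_eq, ← Real.dist_eq]
        exact le_max_right _ _
      have htri : dist (Xc i (max q.1 0) q.2) (Xc i (max q'.1 0) q'.2)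
          ≤ |Xc i (max q.1 0) q.2 - Xc i (max q'.1 0) q.2|
            + |Xc i (max q'.1 0) q.2 - Xc i (max q'.1 0) q'.2| := by
        rw [Real.dist_eq]
        exact abs_sub_le _ _ _
      have hkey : c * dist (Xc i (max q.1 0) q.2) (Xc i (max q'.1 0) q'.2)
          ≤ ((Li i : ℝ) + 1) * dist q q' := by
        have hLd : (Li i : ℝ) * |max q.1 0 - max q'.1 0| ≤ (Li i : ℝ) * dist q q' :=
          mul_le_mul_of_nonneg_left (e3.trans hd1) (Li i).coe_nonneg
        nlinarith [dist_nonneg (x := q) (y := q'), mul_le_mul_of_nonneg_left htri hc.le]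
      rw [hM, div_mul_eq_mul_div, le_div_iff₀ hc]
      linarith
    exact hlip.continuous
  -- along almost every characteristic curve, a.e. time is a good point
  have hcurveG : ∀ i : Fin n, ∀ᵐ z : ℝ, ∀ᵐ t : ℝ, 0 < t → (t, Xc i t z) ∉ Nbad := by
    intro i
    set Φ : ℝ × ℝ → ℝ × ℝ := fun q => (q.1, Xc i (max q.1 0) q.2) with hΦ
    have hΦc : Continuous Φ := continuous_fst.prodMk (hXcC i)
    set B : Set (ℝ × ℝ) := (Set.Ioi (0:ℝ) ×ˢ Set.univ) ∩ Φ ⁻¹' Nbad with hBdef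
    have hBmeas : MeasurableSet B :=
      (measurableSet_Ioi.prod MeasurableSet.univ).inter (hΦc.measurable hNmeas)
    have hBnull : volume B = 0 := by
      rw [Measure.volume_eq_prod, Measure.measure_prod_null hBmeas]
      have hslice : ∀ᵐ t : ℝ, volume (Prod.mk t ⁻¹' Nbad) = 0 := by
        have h1 := hNnull
        rw [Measure.volume_eq_prod] at h1
        exact Measure.measure_ae_null_of_prod_null h1
      filter_upwards [hslice] with t hslt
      by_cases ht : 0 < t
      · have hsub : Prod.mk t ⁻¹' B ⊆ (Y i t) '' (Prod.mk t ⁻¹' Nbad) := by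
          rintro z ⟨_, hz2⟩
          refine ⟨Xc i t z, ?_, hYXc i t ht.le z⟩
          simpa [hΦ, max_eq_left ht.le] using hz2
        exact measure_mono_null hsub (lip_image_null (hYxlip i t ht.le) hslt)
      · have hempty : Prod.mk t ⁻¹' B = ∅ := by
          ext z
          simp only [Set.mem_preimage, Set.mem_empty_iff_false, iff_false, hBdef]
          rintro ⟨⟨ht1, -⟩, -⟩
          exact ht ht1
        simp [hempty]
    have hswap : volume (Prod.swap ⁻¹' B : Set (ℝ × ℝ)) = 0 := by
      rw [Measure.volume_eq_prod]
      rw [Measure.measurePreserving_swap.measure_preimage hBmeas.nullMeasurableSet]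
      rw [Measure.volume_eq_prod] at hBnull
      exact hBnull
    have hae : ∀ᵐ q : ℝ × ℝ, q ∉ (Prod.swap ⁻¹' B : Set (ℝ × ℝ)) := by
      rw [ae_iff]
      simpa [Set.preimage] using hswap
    rw [Measure.volume_eq_prod] at hae
    have h2 := Measure.ae_ae_of_ae_prod hae
    filter_upwards [h2] with z hz
    filter_upwards [hz] with t ht htpos hmem
    refine ht ?_
    show ((z, t) : ℝ × ℝ) ∈ Prod.swap ⁻¹' B
    refine ⟨⟨htpos, trivial⟩, ?_⟩
    show Φ (t, z) ∈ Nbad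
    simpa [hΦ, max_eq_left htpos.le] using hmem
  -- the key derivative facts along characteristics
  have hkey : ∀ i : Fin n, ∀ᵐ z : ℝ, ∀ᵐ t : ℝ, 0 < t →
      (HasDerivAt (fun s => Xc i s z) (lam i (w t (Xc i t z))) t ∧
       ∀ j : Fin n, HasDerivAt (fun s => Y j s (Xc i s z))
         (Nf j (w t (Xc i t z)) * (lam i (w t (Xc i t z)) - lam j (w t (Xc i t z)))) t) := by
    intro i
    filter_upwards [hcurveG i] with z hz
    set γ : ℝ → ℝ := fun s => Xc i (max s 0) z with hγ
    have hγlip : LipschitzWith ((Li i : ℝ) / c).toNNReal γ := by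
      refine LipschitzWith.of_dist_le_mul fun s s' => ?_
      rw [Real.coe_toNNReal _ (by positivity)]
      have h1 : (0:ℝ) ≤ max s 0 := le_max_right _ _
      have h1' : (0:ℝ) ≤ max s' 0 := le_max_right _ _
      have e1 := hXclipt i (max s 0) (max s' 0) h1 h1' z
      have e3 : |max s 0 - max s' 0| ≤ |s - s'| := abs_max_sub_max_le_abs _ _ _
      rw [Real.dist_eq, Real.dist_eq, div_mul_eq_mul_div, le_div_iff₀ hc]
      have hLd : (Li i : ℝ) * |max s 0 - max s' 0| ≤ (Li i : ℝ) * |s - s'| :=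
        mul_le_mul_of_nonneg_left e3 (Li i).coe_nonneg
      simp only [hγ]
      nlinarith [abs_nonneg (s - s')]
    have hγdiff : ∀ᵐ s : ℝ, DifferentiableAt ℝ γ s := hγlip.ae_differentiableAt
    filter_upwards [hz, hγdiff] with t hgood hdiff htpos
    have hevγ : (fun s => Xc i s z) =ᶠ[nhds t] γ :=
      eventually_of_mem (isOpen_Ioi.mem_nhds htpos)
        (fun s hs => by simp [hγ, max_eq_left (le_of_lt (Set.mem_Ioi.1 hs))])
    have hγd : HasDerivAt γ (deriv γ t) t := hdiff.hasDerivAt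
    have hXd : HasDerivAt (fun s => Xc i s z) (deriv γ t) t :=
      (Filter.EventuallyEq.hasDerivAt_iff hevγ).2 hγd
    have hcurv : HasDerivAt (fun s => ((s, Xc i s z) : ℝ × ℝ)) ((1:ℝ), deriv γ t) t :=
      (hasDerivAt_id t).prodMk hXd
    have hNp := hgood htpos
    have hgood2 := hNgood (t, Xc i t z) hNp htpos
    have hcomp : ∀ j : Fin n, HasDerivAt (fun s => Y j s (Xc i s z))
        (-(Nf j (w t (Xc i t z)) * lam j (w t (Xc i t z))) * 1
          + Nf j (w t (Xc i t z)) * deriv γ t) t := by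
      intro j
      have h1 := (hgood2 j).comp_hasDerivAt t hcurv
      simpa [hmkD_apply, Function.comp_def] using h1
    have hconst : HasDerivAt (fun s => Y i s (Xc i s z)) 0 t := by
      have hevc : (fun s => Y i s (Xc i s z)) =ᶠ[nhds t] (fun _ => z) :=
        eventually_of_mem (isOpen_Ioi.mem_nhds htpos)
          (fun s hs => hYXc i s (le_of_lt hs) z)
      exact (Filter.EventuallyEq.hasDerivAt_iff hevc).2 (hasDerivAt_const t z)
    have heq0 : -(Nf i (w t (Xc i t z)) * lam i (w t (Xc i t z))) * 1
        + Nf i (w t (Xc i t z)) * deriv γ t = 0 := (hcomp i).unique hconst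
    have hNpos : 0 < Nf i (w t (Xc i t z)) :=
      lt_of_lt_of_le hc (hNbd i _ (hwK t _ htpos.le)).1
    have hγval : deriv γ t = lam i (w t (Xc i t z)) := by
      have h2 : Nf i (w t (Xc i t z)) * (deriv γ t - lam i (w t (Xc i t z))) = 0 := by
        linear_combination heq0
      rcases mul_eq_zero.1 h2 with h3 | h3
      · exact absurd h3 (ne_of_gt hNpos)
      · linarith
    constructor
    · rw [← hγval]
      exact hXd
    · intro j
      have h4 := hcomp j
      rw [hγval] at h4
      convert h4 using 1
      ring
  -- Separation estimate along characteristics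
  have hsep : ∀ i j : Fin n, (i : ℕ) + 1 = (j : ℕ) → ∀ t : ℝ, 0 ≤ t → ∀ z : ℝ,
      Y j t (Xc i t z) ≤ Y j 0 (Xc i 0 z) - c * σ * t := by
    intro i j hij
    have haez : ∀ᵐ z : ℝ, ∀ t : ℝ, 0 ≤ t →
        Y j t (Xc i t z) ≤ Y j 0 (Xc i 0 z) - c * σ * t := by
      filter_upwards [hkey i] with z hz
      intro t ht
      rcases eq_or_lt_of_le ht with rfl | htpos
      · simp
      set g : ℝ → ℝ := fun s => Y j s (Xc i s z) with hgdef
      have hglip : LipschitzOnWith ((Li j : ℝ) * (1 + (Li i : ℝ)/c)).toNNReal g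
          (Set.Icc 0 t) := by
        refine LipschitzOnWith.of_dist_le_mul fun s hs s' hs' => ?_
        rw [Real.coe_toNNReal _ (by positivity)]
        have h1 := (hYL j).dist_le_mul (s, Xc i s z) ⟨hs.1, trivial⟩
          (s', Xc i s' z) ⟨hs'.1, trivial⟩
        have h2 := hXclipt i s s' hs.1 hs'.1 z
        have hXle : |Xc i s z - Xc i s' z| ≤ (Li i : ℝ)/c * |s - s'| := by
          rw [div_mul_eq_mul_div, le_div_iff₀ hc]
          linarith
        have hdp : dist ((s, Xc i s z) : ℝ × ℝ) ((s', Xc i s' z))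
            ≤ (1 + (Li i : ℝ)/c) * |s - s'| := by
          rw [Prod.dist_eq, Real.dist_eq, Real.dist_eq]
          have hLic : (0:ℝ) ≤ (Li i : ℝ)/c := by positivity
          refine max_le ?_ ?_
          · nlinarith [abs_nonneg (s - s')]
          · calc |Xc i s z - Xc i s' z| ≤ (Li i : ℝ)/c * |s - s'| := hXle
            _ ≤ (1 + (Li i : ℝ)/c) * |s - s'| := by nlinarith [abs_nonneg (s - s')]
        calc dist (g s) (g s')
            ≤ (Li j : ℝ) * dist ((s, Xc i s z) : ℝ × ℝ) ((s', Xc i s' z)) := h1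
        _ ≤ (Li j : ℝ) * ((1 + (Li i : ℝ)/c) * |s - s'|) :=
            mul_le_mul_of_nonneg_left hdp (Li j).coe_nonneg
        _ = (Li j : ℝ) * (1 + (Li i : ℝ)/c) * dist s s' := by
            rw [Real.dist_eq]; ring
      have hineq := lipOn_ae_deriv_le (a := 0) (b := t) (M := -(c*σ)) ht hglip ?_
      · have : g t - g 0 ≤ -(c*σ) * (t - 0) := hineq
        simp only [hgdef] at this
        linarith
      · filter_upwards [hz] with s hs hsIoo
        obtain ⟨hd1, hd2⟩ := hs hsIoo.1
        refine ⟨_, hd2 j, ?_⟩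
        have hwm := hwK s (Xc i s z) hsIoo.1.le
        have hNj := hNbd j _ hwm
        have hgap' := hgap _ hwm i j hij
        have e1 : Nf j (w s (Xc i s z)) * (lam i (w s (Xc i s z)) - lam j (w s (Xc i s z)))
            ≤ Nf j (w s (Xc i s z)) * (-σ) :=
          mul_le_mul_of_nonneg_left (by linarith) (by linarith [hNj.1])
        have e2 : Nf j (w s (Xc i s z)) * (-σ) ≤ c * (-σ) :=
          mul_le_mul_of_nonpos_right hNj.1 (by linarith)
        calc Nf j (w s (Xc i s z)) * (lam i (w s (Xc i s z)) - lam j (w s (Xc i s z)))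
            ≤ c * (-σ) := e1.trans e2
        _ = -(c*σ) := by ring
    intro t ht z
    obtain ⟨u, hu1, hu2⟩ := tendsto_seq_of_ae haez (fun _ => z)
      (fun k => z + 1 / (k + 1)) z
      (fun k => by
        have : (0:ℝ) < 1 / ((k:ℝ) + 1) := by positivity
        linarith)
      tendsto_const_nhds
      (by
        have h0 : Tendsto (fun k : ℕ => 1 / ((k:ℝ) + 1)) atTop (nhds 0) :=
          tendsto_one_div_add_atTop_nhds_zero_nat
        simpa using tendsto_const_nhds.add h0)
    have hXcont : ∀ s : ℝ, 0 ≤ s →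
        Tendsto (fun k => Y j s (Xc i s (u k))) atTop (nhds (Y j s (Xc i s z))) := by
      intro s hs
      rw [tendsto_iff_dist_tendsto_zero]
      refine squeeze_zero (fun k => dist_nonneg)
        (g := fun k => (Li j : ℝ) * (|u k - z| / c)) ?_ ?_
      · intro k
        have h1 := (hYxlip j s hs).dist_le_mul (Xc i s (u k)) (Xc i s z)
        have h2 := hXclipz i s hs (u k) z
        have h3 : dist (Xc i s (u k)) (Xc i s z) ≤ |u k - z| / c := by
          rw [Real.dist_eq, le_div_iff₀ hc]
          linarith
        calc dist (Y j s (Xc i s (u k))) (Y j s (Xc i s z))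
            ≤ (Li j : ℝ) * dist (Xc i s (u k)) (Xc i s z) := h1
        _ ≤ (Li j : ℝ) * (|u k - z| / c) :=
            mul_le_mul_of_nonneg_left h3 (Li j).coe_nonneg
      · have h0 : Tendsto (fun k => u k - z) atTop (nhds 0) := by
          simpa using hu2.sub (tendsto_const_nhds (x := z))
        have h1 : Tendsto (fun k => (Li j : ℝ) * (|u k - z| / c)) atTop
            (nhds ((Li j : ℝ) * (|(0:ℝ)| / c))) :=
          (((h0.abs).div_const c).const_mul _)
        simpa using h1
    refine le_of_tendsto_of_tendsto' (hXcont t ht) (((hXcont 0 le_rfl).sub_const (c*σ*t)))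
      (fun k => ?_)
    exact (hu1 k).1 t ht
  -- definitions of tL and the limit speeds
  set tL : ℝ := 2 * L * C / (c * σ) with htLdef
  have htL : 0 < tL := by positivity
  set lb : Fin n → ℝ := fun i => lam i (fun l => if l ≤ i then wbarp l else wbarm l)
    with hlbdef
  have hconsec : ∀ t : ℝ, tL < t → ∀ i j : Fin n, (i:ℕ)+1 = (j:ℕ) →
      Xc i t (Y0 i L) < Xc j t (Y0 j (-L)) := by
    intro t htl i j hij
    have ht0 : (0:ℝ) ≤ t := le_trans htL.le htl.le
    have h1 := hsep i j hij t ht0 (Y0 i L)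
    have hXc0L : Xc i 0 (Y0 i L) = L := by
      rw [← hYinit i L]; exact hXcY i 0 le_rfl L
    rw [hXc0L, hYinit j L] at h1
    have h2 : Y0 j L - Y0 j (-L) ≤ C * (2 * L) := by
      have h3 := (hY0incr j (-L) L (by linarith)).2
      have : L - (-L) = 2 * L := by ring
      rw [this] at h3
      linarith
    have h3 : 2 * L * C < c * σ * t := by
      have h4 := (div_lt_iff₀ (show (0:ℝ) < c * σ by positivity)).1 htl
      linarith
    have h4 : Y j t (Xc i t (Y0 i L)) < Y0 j (-L) := by linarith
    have h5 : Y j t (Xc i t (Y0 i L)) < Y j t (Xc j t (Y0 j (-L))) := by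
      rw [hYXc j t ht0]; exact h4
    exact (hYsm j t ht0).lt_iff_lt.1 h5
  have hlocal : ∀ t : ℝ, 0 ≤ t → ∀ i : Fin n, Xc i t (Y0 i (-L)) < Xc i t (Y0 i L) := by
    intro t ht i
    exact hXcsm i t ht (hY0sm i (by linarith))
  have hchain : ∀ t : ℝ, tL < t → ∀ k m : Fin n, k < m →
      Xc k t (Y0 k L) < Xc m t (Y0 m (-L)) := by
    intro t htl
    have ht0 : (0:ℝ) ≤ t := le_trans htL.le htl.le
    have haux : ∀ d : ℕ, ∀ k m : Fin n, (m:ℕ) = (k:ℕ) + 1 + d →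
        Xc k t (Y0 k L) < Xc m t (Y0 m (-L)) := by
      intro d
      induction d with
      | zero => exact fun k m hkm => hconsec t htl k m (by omega)
      | succ d ih =>
        intro k m hkm
        have hm1 : (m:ℕ) - 1 < n := by omega
        set m' : Fin n := ⟨(m:ℕ) - 1, hm1⟩ with hm'
        have h1 : Xc k t (Y0 k L) < Xc m' t (Y0 m' (-L)) := ih k m' (by simp [hm']; omega)
        have h2 : Xc m' t (Y0 m' (-L)) < Xc m' t (Y0 m' L) := hlocal t ht0 m'
        have h3 : Xc m' t (Y0 m' L) < Xc m t (Y0 m (-L)) :=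
          hconsec t htl m' m (by simp [hm']; omega)
        linarith
    intro k m hkm
    have hkm' : (k:ℕ) < (m:ℕ) := Fin.lt_def.1 hkm
    exact haux ((m:ℕ) - (k:ℕ) - 1) k m (by omega)
  -- region: off-components are constants
  have hregion : ∀ t : ℝ, tL < t → ∀ i : Fin n, ∀ x : ℝ,
      Xc i t (Y0 i (-L)) ≤ x → x ≤ Xc i t (Y0 i L) →
      (∀ j : Fin n, j < i → w t x j = wbarp j) ∧
      (∀ j : Fin n, i < j → w t x j = wbarm j) := by
    intro t htl i x hx1 hx2
    have ht0 : (0:ℝ) ≤ t := le_trans htL.le htl.le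
    constructor
    · intro j hji
      refine hcompp j t x ht0 ?_
      have h1 : Xc j t (Y0 j L) < Xc i t (Y0 i (-L)) := hchain t htl j i hji
      have h2 : Xc j t (Y0 j L) < x := lt_of_lt_of_le h1 hx1
      have h3 := (hXltx j t ht0 _ x).1 h2
      linarith
    · intro j hij
      refine hcompm j t x ht0 ?_
      have h1 : Xc i t (Y0 i L) < Xc j t (Y0 j (-L)) := hchain t htl i j hij
      exact (hXlex j t ht0 _ x).1 (le_trans hx2 h1.le)
  have hlamreg : ∀ t : ℝ, tL < t → ∀ i : Fin n, ∀ x : ℝ,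
      Xc i t (Y0 i (-L)) ≤ x → x ≤ Xc i t (Y0 i L) →
      lam i (w t x) = lb i := by
    intro t htl i x hx1 hx2
    obtain ⟨hp, hm⟩ := hregion t htl i x hx1 hx2
    refine hlindeg i (w t x) _ (fun j hj => ?_)
    rcases lt_or_gt_of_ne hj with h | h
    · rw [hp j h, if_pos h.le]
    · rw [hm j h, if_neg (not_le.2 h)]
  -- absolute increments for Y0 / Xc0
  have hY0abs : ∀ (i : Fin n) (u v : ℝ), c * |u - v| ≤ |Y0 i u - Y0 i v| := by
    intro i u v
    rcases le_total v u with hh | hh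
    · have := (hY0incr i v u hh).1
      rw [abs_of_nonneg (by linarith), abs_of_nonneg (by nlinarith)]
      linarith
    · have := (hY0incr i u v hh).1
      rw [abs_of_nonpos (by linarith), abs_of_nonpos (by nlinarith)]
      linarith
  have hXc0abs : ∀ (i : Fin n) (a b : ℝ), c * |Xc0 i a - Xc0 i b| ≤ |a - b| := by
    intro i a b
    have := hY0abs i (Xc0 i a) (Xc0 i b)
    rwa [hY0Xc0, hY0Xc0] at this
  -- wave identity
  set t0 : ℝ := tL + 1 with ht0def
  have ht0L : tL < t0 := by linarith
  have ht00 : (0:ℝ) ≤ t0 := by linarith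
  have hwave : ∀ i : Fin n, ∀ t : ℝ, tL < t → ∀ z : ℝ,
      Y0 i (-L) ≤ z → z ≤ Y0 i L → Xc i t z = Xc i t0 z + lb i * (t - t0) := by
    intro i
    have haez : ∀ᵐ z : ℝ, ∀ t : ℝ, tL < t → Y0 i (-L) ≤ z → z ≤ Y0 i L →
        Xc i t z = Xc i t0 z + lb i * (t - t0) := by
      filter_upwards [hkey i] with z hz
      intro t htl hz1 hz2
      have hder : ∀ᵐ s : ℝ, tL < s → HasDerivAt (fun r => Xc i r z) (lb i) s := by
        filter_upwards [hz] with s hs hstl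
        have hspos : 0 < s := lt_trans htL hstl
        obtain ⟨hd1, -⟩ := hs hspos
        have hx1 : Xc i s (Y0 i (-L)) ≤ Xc i s z := hXcmono i s hspos.le hz1
        have hx2 : Xc i s z ≤ Xc i s (Y0 i L) := hXcmono i s hspos.le hz2
        have heq := hlamreg s hstl i (Xc i s z) hx1 hx2
        rwa [heq] at hd1
      have hlipc : ∀ a b : ℝ, 0 ≤ a →
          LipschitzOnWith ((Li i : ℝ)/c).toNNReal (fun r => Xc i r z) (Set.Icc a b) := by
        intro a b ha
        refine LipschitzOnWith.of_dist_le_mul fun s hs s' hs' => ?_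
        rw [Real.coe_toNNReal _ (by positivity), Real.dist_eq, Real.dist_eq,
          div_mul_eq_mul_div, le_div_iff₀ hc]
        have := hXclipt i s s' (le_trans ha hs.1) (le_trans ha hs'.1) z
        linarith
      rcases le_total t0 t with hord | hord
      · have heq := lipOn_ae_deriv_eq (a := t0) (b := t) (v := lb i) hord
          (hlipc t0 t ht00) ?_
        · linarith
        · filter_upwards [hder] with s hs hsIoo
          exact hs (lt_trans ht0L hsIoo.1)
      · have heq := lipOn_ae_deriv_eq (a := t) (b := t0) (v := lb i) hord
          (hlipc t t0 (le_trans htL.le htl.le)) ?_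
        · linarith
        · filter_upwards [hder] with s hs hsIoo
          exact hs (lt_trans htl hsIoo.1)
    intro t htl z hz1 hz2
    have htnn : (0:ℝ) ≤ t := le_trans htL.le htl.le
    have hab : Y0 i (-L) < Y0 i L := hY0sm i (by linarith)
    have hδ : Tendsto (fun k : ℕ => 1/((k:ℝ)+1)) atTop (nhds 0) :=
      tendsto_one_div_add_atTop_nhds_zero_nat
    have hlh : ∀ k : ℕ, max (Y0 i (-L)) (z - 1/((k:ℝ)+1)) < min (Y0 i L) (z + 1/((k:ℝ)+1)) := by
      intro k
      have hd : (0:ℝ) < 1/((k:ℝ)+1) := by positivity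
      exact max_lt (lt_min hab (by linarith)) (lt_min (by linarith) (by linarith))
    have hlo : Tendsto (fun k : ℕ => max (Y0 i (-L)) (z - 1/((k:ℝ)+1))) atTop (nhds z) := by
      have h1 : Tendsto (fun k : ℕ => z - 1/((k:ℝ)+1)) atTop (nhds z) := by
        simpa using tendsto_const_nhds.sub hδ
      have h2 := (tendsto_const_nhds (x := Y0 i (-L)) (f := atTop (α := ℕ))).max h1
      rwa [max_eq_right hz1] at h2
    have hhi : Tendsto (fun k : ℕ => min (Y0 i L) (z + 1/((k:ℝ)+1))) atTop (nhds z) := by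
      have h1 : Tendsto (fun k : ℕ => z + 1/((k:ℝ)+1)) atTop (nhds z) := by
        simpa using tendsto_const_nhds.add hδ
      have h2 := (tendsto_const_nhds (x := Y0 i L) (f := atTop (α := ℕ))).min h1
      rwa [min_eq_right hz2] at h2
    obtain ⟨u, hu1, hu2⟩ := tendsto_seq_of_ae haez _ _ z hlh hlo hhi
    have hue : ∀ k, Xc i t (u k) = Xc i t0 (u k) + lb i * (t - t0) := by
      intro k
      refine (hu1 k).1 t htl ?_ ?_
      · exact le_trans (le_max_left _ _) (hu1 k).2.1.le
      · exact le_trans (hu1 k).2.2.le (min_le_left _ _)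
    have hXz : ∀ s : ℝ, 0 ≤ s →
        Tendsto (fun k => Xc i s (u k)) atTop (nhds (Xc i s z)) := by
      intro s hs
      rw [tendsto_iff_dist_tendsto_zero]
      refine squeeze_zero (fun k => dist_nonneg) (g := fun k => |u k - z| / c) ?_ ?_
      · intro k
        have h2 := hXclipz i s hs (u k) z
        rw [Real.dist_eq, le_div_iff₀ hc]
        linarith
      · have h0 : Tendsto (fun k => u k - z) atTop (nhds 0) := by
          simpa using hu2.sub (tendsto_const_nhds (x := z))
        simpa using (h0.abs).div_const c
    have hlim2 := (hXz t0 ht00).add_const (lb i * (t - t0))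
    have hlim3 : Tendsto (fun k => Xc i t (u k)) atTop
        (nhds (Xc i t0 z + lb i * (t - t0))) :=
      Tendsto.congr (fun k => (hue k).symm) hlim2
    exact tendsto_nhds_unique (hXz t htnn) hlim3
  -- profiles
  set φ : Fin n → ℝ → ℝ := fun i y => Xc0 i (Y i t0 (y + lb i * t0)) with hφdef
  have hφlip : ∀ i, ∃ Lip : NNReal, LipschitzWith Lip (φ i) := by
    intro i
    refine ⟨((Li i : ℝ)/c).toNNReal, LipschitzWith.of_dist_le_mul fun y y' => ?_⟩
    rw [Real.coe_toNNReal _ (by positivity), Real.dist_eq, Real.dist_eq]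
    have h1 := hXc0abs i (Y i t0 (y + lb i * t0)) (Y i t0 (y' + lb i * t0))
    have h2 := (hYxlip i t0 ht00).dist_le_mul (y + lb i * t0) (y' + lb i * t0)
    rw [Real.dist_eq, Real.dist_eq] at h2
    have h3 : y + lb i * t0 - (y' + lb i * t0) = y - y' := by ring
    rw [h3] at h2
    simp only [hφdef]
    rw [div_mul_eq_mul_div, le_div_iff₀ hc]
    calc |Xc0 i (Y i t0 (y + lb i * t0)) - Xc0 i (Y i t0 (y' + lb i * t0))| * c
        = c * |Xc0 i (Y i t0 (y + lb i * t0)) - Xc0 i (Y i t0 (y' + lb i * t0))| := by ring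
    _ ≤ |Y i t0 (y + lb i * t0) - Y i t0 (y' + lb i * t0)| := h1
    _ ≤ (Li i : ℝ) * |y - y'| := h2
  -- final assembly
  refine ⟨tL, htL, φ, hφlip, ?_⟩
  intro t htl
  have htnn : (0:ℝ) ≤ t := le_trans htL.le htl.le
  refine ⟨fun i => hlocal t htnn i, fun i j hij => hconsec t htl i j hij, ?_⟩
  refine Filter.Eventually.of_forall (fun x => ?_)
  refine ⟨?_, ?_, ?_, ?_⟩
  · -- left constant region
    intro hx
    funext l
    refine hcompm l t x htnn ?_
    have hle : Xc (⟨0, by omega⟩ : Fin n) t (Y0 (⟨0, by omega⟩ : Fin n) (-L))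
        ≤ Xc l t (Y0 l (-L)) := by
      by_cases hl : (l:ℕ) = 0
      · have : l = (⟨0, by omega⟩ : Fin n) := Fin.ext hl
        rw [this]
      · have hlt : (⟨0, by omega⟩ : Fin n) < l := by
          refine Fin.lt_def.2 ?_
          show 0 < (l:ℕ)
          omega
        have h1 := hchain t htl _ l hlt
        have h2 := hlocal t htnn (⟨0, by omega⟩ : Fin n)
        linarith
    exact (hXlex l t htnn _ x).1 (le_trans hx hle)
  · -- middle constant regions
    intro i j hij hx1 hx2
    funext l
    by_cases hli : l ≤ i
    · simp only [if_pos hli]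
      refine hcompp l t x htnn ?_
      have hle : Xc l t (Y0 l L) < x := by
        rcases eq_or_lt_of_le hli with heq | hlt
        · rw [heq]; exact hx1
        · have h1 : Xc l t (Y0 l L) < Xc i t (Y0 i (-L)) := hchain t htl l i hlt
          have h2 : Xc i t (Y0 i (-L)) < Xc i t (Y0 i L) := hlocal t htnn i
          linarith
      have h3 := (hXltx l t htnn _ x).1 hle
      linarith
    · simp only [if_neg hli]
      refine hcompm l t x htnn ?_
      have hjl : j ≤ l := by
        have h1 : i < l := not_le.1 hli
        have h2 := Fin.lt_def.1 h1
        exact Fin.le_def.2 (by omega)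
      have hle : x ≤ Xc l t (Y0 l (-L)) := by
        rcases eq_or_lt_of_le hjl with heq | hlt
        · rw [← heq]; exact hx2
        · have h1 : Xc j t (Y0 j (-L)) < Xc j t (Y0 j L) := hlocal t htnn j
          have h2 : Xc j t (Y0 j L) < Xc l t (Y0 l (-L)) := hchain t htl j l hlt
          linarith
      exact (hXlex l t htnn _ x).1 hle
  · -- right constant region
    intro hx
    funext l
    refine hcompp l t x htnn ?_
    have hle : Xc l t (Y0 l L) ≤ Xc (⟨n-1, by omega⟩ : Fin n) t (Y0 (⟨n-1, by omega⟩ : Fin n) L) := by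
      by_cases hl : (l:ℕ) = n - 1
      · have : l = (⟨n-1, by omega⟩ : Fin n) := Fin.ext hl
        rw [this]
      · have hlt : l < (⟨n-1, by omega⟩ : Fin n) := by
          refine Fin.lt_def.2 ?_
          show (l:ℕ) < n - 1
          have := l.isLt
          omega
        have h1 := hchain t htl l _ hlt
        have h2 := hlocal t htnn (⟨n-1, by omega⟩ : Fin n)
        linarith
    have h3 := (hXltx l t htnn _ x).1 (lt_of_le_of_lt hle hx)
    linarith
  · -- traveling waves
    intro i hx1 hx2
    obtain ⟨hp, hm⟩ := hregion t htl i x (le_of_lt hx1) hx2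
    refine ⟨fun j hj => hp j hj, fun j hj => hm j hj, ?_⟩
    have hz1 : Y0 i (-L) < Y i t x := (hXltx i t htnn _ x).1 hx1
    have hz2 : Y i t x ≤ Y0 i L := (hXlex i t htnn _ x).1 hx2
    set z := Y i t x with hzdef
    have hxz : x = Xc i t z := (hXcY i t htnn x).symm
    have hw1 := hwave i t htl z hz1.le hz2
    have harg : x - lb i * t + lb i * t0 = Xc i t0 z := by
      rw [hxz]
      nth_rewrite 1 [hw1]
      ring
    show w t x i = w0 (φ i (x - lb i * t)) i
    have hφval : φ i (x - lb i * t) = Xc0 i z := by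
      simp only [hφdef]
      rw [harg, hYXc i t0 ht00 z]
    rw [hwsol i t x htnn, ← hzdef, hφval]
end
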